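/- arXiv:1611.04370 — 7 statements merged into one kernel-verified Lean document; each statement's English description precedes it below -/
import Mathlib

section
/- Let G be a locally finite graph and e an edge of G. If the set Σ(G) of lengths of maximal internally isolated paths in G is finite, then Σ(G − e) is also finite. -/
open SimpleGraph

variable {V W U : Type*}

/-- A walk is a *maximal internally isolated path* if it is a path, its endpoints have
degree `≠ 2`, and all internal vertices have degree `2`. -/
def IsMiiPath (G : SimpleGraph V) {u v : V} (p : G.Walk u v) : Prop :=
  p.IsPath ∧ (G.neighborSet u).ncard ≠ 2 ∧ (G.neighborSet v).ncard ≠ 2 ∧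
    ∀ w ∈ p.support, w ≠ u → w ≠ v → (G.neighborSet w).ncard = 2

/-- The mii-spectrum of a graph: lengths of its maximal internally isolated paths. -/
def miiSpectrum (G : SimpleGraph V) : Set ℕ :=
  {k | ∃ (u v : V) (p : G.Walk u v), IsMiiPath G p ∧ p.length = k}

/-- The space of ends of a graph: compatible choices of a component of the complement of
each finite vertex set. -/
def EndSpace (G : SimpleGraph V) : Type _ :=
  {f : ∀ K : Finset V, G.ComponentCompl (K : Set V) //
    ∀ (K L : Finset V) (h : K ⊆ L), (f L).hom (by exact_mod_cast h) = f K}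

instance (G : SimpleGraph V) (K : Set V) : TopologicalSpace (G.ComponentCompl K) := ⊥

instance (G : SimpleGraph V) : TopologicalSpace (EndSpace G) :=
  instTopologicalSpaceSubtype

/-- A graph is one-ended if it has exactly one end. -/
def OneEnded (G : SimpleGraph V) : Prop :=
  ∃ e : EndSpace G, ∀ e' : EndSpace G, e' = e

/-- An end is free if it is determined by its component outside some finite vertex set. -/
def IsFreeEnd {G : SimpleGraph V} (e : EndSpace G) : Prop :=
  ∃ K : Finset V, ∀ e' : EndSpace G, e'.1 K = e.1 K → e' = e

/-- The set of ends lying in the closure of a vertex set `X`. -/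
def endBoundary (G : SimpleGraph V) (X : Set V) : Set (EndSpace G) :=
  {e | ∀ K : Finset V, ((e.1 K).supp ∩ X).Infinite}

/-- The disjoint union of two graphs. -/
def sumGraph (G : SimpleGraph V) (F : SimpleGraph W) : SimpleGraph (V ⊕ W) where
  Adj x y := (∃ a b, x = Sum.inl a ∧ y = Sum.inl b ∧ G.Adj a b) ∨
    (∃ a b, x = Sum.inr a ∧ y = Sum.inr b ∧ F.Adj a b)
  symm := by
    constructor
    rintro x y (⟨a, b, rfl, rfl, h⟩ | ⟨a, b, rfl, rfl, h⟩)
    · exact Or.inl ⟨b, a, rfl, rfl, h.symm⟩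
    · exact Or.inr ⟨b, a, rfl, rfl, h.symm⟩
  loopless := by
    constructor
    rintro x (⟨a, b, rfl, h, hab⟩ | ⟨a, b, rfl, h, hab⟩) <;>
      · cases h; exact hab.ne rfl

open Classical in
/-- The setoid identifying each `v ∈ D` (in the left graph) with `ψ v` (in the right one). -/
noncomputable def glueSetoid (D : Set V) (ψ : V → W) : Setoid (V ⊕ W) :=
  Setoid.ker (Sum.elim (fun v => if v ∈ D then Sum.inr (ψ v) else (Sum.inl v : V ⊕ W)) Sum.inr)

/-- The gluing sum `G ⊕_ψ F` of two graphs along a partial map `ψ` with domain `D`. -/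
noncomputable def gluingSum (G : SimpleGraph V) (F : SimpleGraph W) (D : Set V) (ψ : V → W) :
    SimpleGraph (Quotient (glueSetoid D ψ)) :=
  SimpleGraph.fromRel (fun a b => ∃ x y : V ⊕ W,
    a = Quotient.mk (glueSetoid D ψ) x ∧ b = Quotient.mk (glueSetoid D ψ) y ∧
      (sumGraph G F).Adj x y)

/-- Two graphs are hypomorphic if there is a vertex bijection `φ` such that deleting `v`
and `φ v` always yields isomorphic graphs. -/
def Hypomorphic (G : SimpleGraph V) (H : SimpleGraph W) : Prop :=
  ∃ φ : V ≃ W, ∀ v : V,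
    Nonempty ((G.induce {u | u ≠ v}) ≃g (H.induce {u | u ≠ φ v}))

/-- The quotient setoid collapsing a subset `A` to a single point. -/
def collapseSetoid {X : Type*} (A : Set X) : Setoid X where
  r a b := a = b ∨ (a ∈ A ∧ b ∈ A)
  iseqv := by
    constructor
    · exact fun a => Or.inl rfl
    · rintro a b (rfl | ⟨ha, hb⟩); exacts [Or.inl rfl, Or.inr ⟨hb, ha⟩]
    · rintro a b c (rfl | ⟨ha, hb⟩) (rfl | ⟨hb', hc⟩)
      exacts [Or.inl rfl, Or.inr ⟨hb', hc⟩, Or.inr ⟨ha, hb⟩, Or.inr ⟨ha, hc⟩]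

/-- The one-way infinite path (ray) on `ℕ`. -/
def rayGraph : SimpleGraph ℕ :=
  SimpleGraph.fromRel (fun m n => n = m + 1)

/-- `r : ℕ → V` is a ray in `G`. -/
structure IsRay (G : SimpleGraph V) (r : ℕ → V) : Prop where
  inj : Function.Injective r
  adj : ∀ n, G.Adj (r n) (r (n + 1))

/-- Two rays are equivalent if for every finite vertex set `S` they have tails lying in,
and connected within, the same component of `G - S`. -/
def RayEquiv (G : SimpleGraph V) (r r' : ℕ → V) : Prop :=
  ∀ S : Finset V, ∃ n n' : ℕ,
    (∀ k ≥ n, r k ∉ (S : Set V)) ∧ (∀ k ≥ n', r' k ∉ (S : Set V)) ∧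
    ∃ (h : r n ∈ ((S : Set V))ᶜ) (h' : r' n' ∈ ((S : Set V))ᶜ),
      (G.induce ((S : Set V))ᶜ).Reachable ⟨r n, h⟩ ⟨r' n', h'⟩

private lemma two_elem_eq {S : Set V} (h : S.ncard = 2) {a x y : V}
    (ha : a ∈ S) (hx : x ∈ S) (hy : y ∈ S) (hxa : x ≠ a) (hya : y ≠ a) : x = y := by
  obtain ⟨p, q, hpq, rfl⟩ := Set.ncard_eq_two.mp h
  simp only [Set.mem_insert_iff, Set.mem_singleton_iff] at ha hx hy
  rcases ha with rfl | rfl <;> rcases hx with rfl | rfl <;> rcases hy with rfl | rfl <;> simp_all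

private lemma tailChain_length_eq {H : SimpleGraph V} :
    ∀ (n : ℕ) {a b c : V} (p : H.Walk a b) (q : H.Walk a c),
    p.length ≤ n → p.IsPath → q.IsPath →
    (H.neighborSet b).ncard ≠ 2 → (H.neighborSet c).ncard ≠ 2 →
    (∀ z ∈ p.support, z ≠ a → z ≠ b → (H.neighborSet z).ncard = 2) →
    (∀ z ∈ q.support, z ≠ a → z ≠ c → (H.neighborSet z).ncard = 2) →
    ((p.length = 0 ∧ q.length = 0) ∨
      (p.length ≠ 0 ∧ q.length ≠ 0 ∧ p.getVert 1 = q.getVert 1)) →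
    p.length = q.length := by
  intro n
  induction n with
  | zero =>
    intro a b c p q hlen _ _ _ _ _ _ hd
    rcases hd with ⟨h1, h2⟩ | ⟨h1, _, _⟩ <;> omega
  | succ n ih =>
    intro a b c p q hlen hp hq hb hc hip hiq hd
    rcases hd with ⟨h1, h2⟩ | ⟨h1, h2, hv⟩
    · omega
    cases p with
    | nil => simp at h1
    | cons hadj p' =>
      rename_i u
      cases q with
      | nil => simp at h2
      | cons hadj' q' =>
        rename_i u'
        simp only [Walk.getVert_cons_succ, Walk.getVert_zero] at hv
        subst hv
        obtain ⟨hp', hap⟩ := (Walk.cons_isPath_iff _ _).mp hp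
        obtain ⟨hq', haq⟩ := (Walk.cons_isPath_iff _ _).mp hq
        have hip' : ∀ z ∈ p'.support, z ≠ u → z ≠ b → (H.neighborSet z).ncard = 2 :=
          fun z hz hzu hzb => hip z (by simp [hz]) (fun h => hap (h ▸ hz)) hzb
        have hiq' : ∀ z ∈ q'.support, z ≠ u → z ≠ c → (H.neighborSet z).ncard = 2 :=
          fun z hz hzu hzc => hiq z (by simp [hz]) (fun h => haq (h ▸ hz)) hzc
        by_cases hN : (H.neighborSet u).ncard = 2
        · have hub : u ≠ b := fun h => hb (h ▸ hN)
          have huc : u ≠ c := fun h => hc (h ▸ hN)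
          have hp0 : p'.length ≠ 0 := fun h => hub (Walk.eq_of_length_eq_zero h)
          have hq0 : q'.length ≠ 0 := fun h => huc (Walk.eq_of_length_eq_zero h)
          have h1p : p'.getVert 1 ∈ H.neighborSet u := by
            have := p'.adj_getVert_succ (i := 0) (by omega)
            simpa using this
          have h1q : q'.getVert 1 ∈ H.neighborSet u := by
            have := q'.adj_getVert_succ (i := 0) (by omega)
            simpa using this
          have haN : a ∈ H.neighborSet u := hadj.symm
          have hpa : p'.getVert 1 ≠ a := fun h =>
            hap (h ▸ Walk.mem_support_iff_exists_getVert.mpr ⟨1, rfl, by omega⟩)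
          have hqa : q'.getVert 1 ≠ a := fun h =>
            haq (h ▸ Walk.mem_support_iff_exists_getVert.mpr ⟨1, rfl, by omega⟩)
          have heq : p'.getVert 1 = q'.getVert 1 := two_elem_eq hN haN h1p h1q hpa hqa
          have hrec := ih p' q' (by simp only [Walk.length_cons] at hlen; omega)
            hp' hq' hb hc hip' hiq' (Or.inr ⟨hp0, hq0, heq⟩)
          simp [Walk.length_cons, hrec]
        · have hp0 : p'.length = 0 := by
            by_contra h
            have hub : u ≠ b := by
              intro h'
              subst h'
              have := Walk.isPath_iff_eq_nil.mp hp'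
              simp [this] at h
            exact hN (hip u (by simp) hadj.ne' hub)
          have hq0 : q'.length = 0 := by
            by_contra h
            have huc : u ≠ c := by
              intro h'
              subst h'
              have := Walk.isPath_iff_eq_nil.mp hq'
              simp [this] at h
            exact hN (hiq u (by simp) hadj.ne' huc)
          simp [Walk.length_cons, hp0, hq0]


private lemma mii_halves [DecidableEq V] {H : SimpleGraph V} {w u v : V} {p : H.Walk u v}
    (hmii : IsMiiPath H p) (hw : w ∈ p.support) :
    ((p.takeUntil w hw).reverse.IsPath ∧
      (∀ z ∈ (p.takeUntil w hw).reverse.support, z ≠ w → z ≠ u → (H.neighborSet z).ncard = 2)) ∧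
    ((p.dropUntil w hw).IsPath ∧
      (∀ z ∈ (p.dropUntil w hw).support, z ≠ w → z ≠ v → (H.neighborSet z).ncard = 2)) := by
  have hnd := hmii.1.support_nodup
  have hsup : p.support = (p.takeUntil w hw).support ++ (p.dropUntil w hw).support.tail := by
    have := Walk.support_append (p.takeUntil w hw) (p.dropUntil w hw)
    rw [p.take_spec hw] at this
    exact this
  have hdisj : ∀ z, z ∈ (p.takeUntil w hw).support → z ∈ (p.dropUntil w hw).support.tail → False := by
    rw [hsup] at hnd
    exact fun z h1 h2 => (List.nodup_append'.mp hnd).2.2 h1 h2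
  have htail : ∀ z, z ∈ (p.dropUntil w hw).support → z ≠ w → z ∈ (p.dropUntil w hw).support.tail := by
    intro z hz hzw
    rw [Walk.support_eq_cons, List.mem_cons] at hz
    rcases hz with rfl | hz
    · exact absurd rfl hzw
    · exact hz
  refine ⟨⟨(hmii.1.takeUntil hw).reverse, ?_⟩, ⟨hmii.1.dropUntil hw, ?_⟩⟩
  · intro z hz hzw hzu
    rw [Walk.support_reverse, List.mem_reverse] at hz
    have hzv : z ≠ v := by
      intro h
      subst h
      exact hdisj z hz (htail z ((p.dropUntil w hw).end_mem_support) hzw)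
    exact hmii.2.2.2 z (p.support_takeUntil_subset hw hz) hzu hzv
  · intro z hz hzw hzv
    have hzu : z ≠ u := by
      intro h
      subst h
      exact hdisj z ((p.takeUntil w hw).start_mem_support) (htail z hz hzw)
    exact hmii.2.2.2 z (p.support_dropUntil_subset hw hz) hzu hzv

private def chainData {H : SimpleGraph V} {w x : V} (q : H.Walk w x) : Option V :=
  if q.length = 0 then none else some (q.getVert 1)

private lemma chainData_cases {H : SimpleGraph V} {w x y : V} (q : H.Walk w x) (q' : H.Walk w y)
    (h : chainData q = chainData q') :
    (q.length = 0 ∧ q'.length = 0) ∨ (q.length ≠ 0 ∧ q'.length ≠ 0 ∧ q.getVert 1 = q'.getVert 1) := by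
  unfold chainData at h
  by_cases h0 : q.length = 0 <;> by_cases h0' : q'.length = 0 <;> simp [h0, h0'] at h ⊢
  exact h

private lemma mii_length_eq_of_data [DecidableEq V] {H : SimpleGraph V} {w u1 v1 u2 v2 : V}
    {p1 : H.Walk u1 v1} {p2 : H.Walk u2 v2}
    (h1 : IsMiiPath H p1) (h2 : IsMiiPath H p2)
    (hw1 : w ∈ p1.support) (hw2 : w ∈ p2.support)
    (hA : chainData (p1.takeUntil w hw1).reverse = chainData (p2.takeUntil w hw2).reverse)
    (hB : chainData (p1.dropUntil w hw1) = chainData (p2.dropUntil w hw2)) :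
    p1.length = p2.length := by
  obtain ⟨⟨ht1, hti1⟩, ⟨hd1, hdi1⟩⟩ := mii_halves h1 hw1
  obtain ⟨⟨ht2, hti2⟩, ⟨hd2, hdi2⟩⟩ := mii_halves h2 hw2
  have e1 := tailChain_length_eq ((p1.takeUntil w hw1).reverse.length) _ _ le_rfl
    ht1 ht2 h1.2.1 h2.2.1 hti1 hti2 (chainData_cases _ _ hA)
  have e2 := tailChain_length_eq ((p1.dropUntil w hw1).length) _ _ le_rfl
    hd1 hd2 h1.2.2.1 h2.2.2.1 hdi1 hdi2 (chainData_cases _ _ hB)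
  have l1 : p1.length = (p1.takeUntil w hw1).length + (p1.dropUntil w hw1).length := by
    conv_lhs => rw [← p1.take_spec hw1]
    rw [Walk.length_append]
  have l2 : p2.length = (p2.takeUntil w hw2).length + (p2.dropUntil w hw2).length := by
    conv_lhs => rw [← p2.take_spec hw2]
    rw [Walk.length_append]
  simp only [Walk.length_reverse] at e1
  omega

private lemma finite_mii_lengths_through {H : SimpleGraph V} (w : V)
    (hw : (H.neighborSet w).Finite) :
    {k : ℕ | ∃ (u v : V) (p : H.Walk u v), IsMiiPath H p ∧ w ∈ p.support ∧ p.length = k}.Finite := by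
  classical
  rw [← Set.finite_coe_iff]
  set T := {k : ℕ | ∃ (u v : V) (p : H.Walk u v), IsMiiPath H p ∧ w ∈ p.support ∧ p.length = k} with hT
  have hch : ∀ k : T, ∃ (u v : V) (p : H.Walk u v),
      IsMiiPath H p ∧ w ∈ p.support ∧ p.length = (k : ℕ) := fun k => k.2
  choose fu fv fp hmii hsup hlen using hch
  have hmemD : ∀ {x : V} (q : H.Walk w x), chainData q ∈ insert none (some '' H.neighborSet w) := by
    intro x q
    unfold chainData
    split_ifs with h
    · simp
    · have hadj : H.Adj w (q.getVert 1) := by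
        have := q.adj_getVert_succ (i := 0) (by omega)
        simpa using this
      exact Set.mem_insert_iff.mpr (Or.inr ⟨_, hadj, rfl⟩)
  set D : Set (Option V × Option V) :=
    (insert none (some '' H.neighborSet w)) ×ˢ (insert none (some '' H.neighborSet w)) with hD
  have hDfin : D.Finite := ((hw.image some).insert none).prod ((hw.image some).insert none)
  haveI := hDfin.to_subtype
  refine Finite.of_injective (fun k : T =>
    (⟨(chainData ((fp k).takeUntil w (hsup k)).reverse, chainData ((fp k).dropUntil w (hsup k))),
      Set.mk_mem_prod (hmemD _) (hmemD _)⟩ : D)) ?_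
  intro k1 k2 hkk
  simp only [Subtype.mk.injEq, Prod.mk.injEq] at hkk
  have hll := mii_length_eq_of_data (hmii k1) (hmii k2) (hsup k1) (hsup k2) hkk.1 hkk.2
  exact Subtype.ext ((hlen k1).symm.trans (hll.trans (hlen k2)))

/-- deleting an edge from a locally finite graph with finite mii-spectrum
yields a graph with finite mii-spectrum. -/
theorem miiSpectrum_finite_deleteEdge (G : SimpleGraph V)
    (hlf : ∀ v, (G.neighborSet v).Finite)
    (e : Sym2 V) (he : e ∈ G.edgeSet)
    (hfin : (miiSpectrum G).Finite) :
    (miiSpectrum (G.deleteEdges {e})).Finite := by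
  classical
  induction e using Sym2.ind with
  | _ x y =>
  set H := G.deleteEdges {s(x, y)} with hH
  have hsub : ∀ z, H.neighborSet z ⊆ G.neighborSet z := by
    intro z b hb
    rw [SimpleGraph.mem_neighborSet] at hb ⊢
    exact ((SimpleGraph.deleteEdges_adj).mp hb).1
  have hTx := finite_mii_lengths_through (H := H) x ((hlf x).subset (hsub x))
  have hTy := finite_mii_lengths_through (H := H) y ((hlf y).subset (hsub y))
  refine Set.Finite.subset ((hfin.union hTx).union hTy) ?_
  intro k hk
  simp only [miiSpectrum, Set.mem_setOf_eq] at hk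
  obtain ⟨u, v, p, hmii, rfl⟩ := hk
  simp only [Set.mem_union, Set.mem_setOf_eq]
  by_cases hx : x ∈ p.support
  · exact Or.inl (Or.inr ⟨u, v, p, hmii, hx, rfl⟩)
  by_cases hy : y ∈ p.support
  · exact Or.inr ⟨u, v, p, hmii, hy, rfl⟩
  left; left
  simp only [miiSpectrum, Set.mem_setOf_eq]
  have hnb : ∀ z ∈ p.support, G.neighborSet z = H.neighborSet z := by
    intro z hz
    ext b
    simp only [SimpleGraph.mem_neighborSet, hH, SimpleGraph.deleteEdges_adj,
      Set.mem_singleton_iff]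
    constructor
    · intro h
      refine ⟨h, ?_⟩
      intro hzb
      rw [Sym2.eq_iff] at hzb
      rcases hzb with ⟨rfl, rfl⟩ | ⟨rfl, rfl⟩
      · exact hx hz
      · exact hy hz
    · exact fun h => h.1
  have hedges : ∀ f ∈ p.edges, f ∈ G.edgeSet := fun f hf =>
    (SimpleGraph.edgeSet_mono (SimpleGraph.deleteEdges_le _)) (p.edges_subset_edgeSet hf)
  refine ⟨u, v, p.transfer G hedges, ⟨hmii.1.transfer _, ?_, ?_, ?_⟩, p.length_transfer _⟩
  · rw [hnb u p.start_mem_support]; exact hmii.2.1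
  · rw [hnb v p.end_mem_support]; exact hmii.2.2.1
  · intro z hz hzu hzv
    rw [Walk.support_transfer] at hz
    rw [hnb z hz]
    exact hmii.2.2.2 z hz hzu hzv
end

section
/- Let G and F be locally finite connected graphs with F one-ended, and let ψ be a partial bijection from V(G) to V(F) with dom(ψ) infinite. Then the end space of the gluing sum G ⊕_ψ F is homeomorphic to the quotient of the end space Ω(G) obtained by collapsing the end-boundary ∂(dom(ψ)) to a single point. -/
open SimpleGraph

variable {V W U : Type*}

/-! ### Auxiliary development -/

open scoped Classical

namespace GluingAux

open CategoryTheory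

variable {G : SimpleGraph V}

instance (G : SimpleGraph V) (K : Set V) : DiscreteTopology (G.ComponentCompl K) := ⟨rfl⟩

/-- supp of a component is monotone along an end. -/
lemma supp_mono (e : EndSpace G) {K L : Finset V} (h : K ⊆ L) :
    ((e.1 L).supp : Set V) ⊆ (e.1 K).supp := by
  have := e.2 K L h
  rw [← this]
  exact ComponentCompl.subset_hom _ _

lemma mk_eq_of_mem {K : Set V} {C : G.ComponentCompl K} {x : V} (hx : x ∈ C.supp) :
    ∃ h : x ∉ K, G.componentComplMk h = C := hx

lemma eq_of_common_mem {K : Set V} {C C' : G.ComponentCompl K} {x : V}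
    (hx : x ∈ C.supp) (hx' : x ∈ C'.supp) : C = C' := by
  obtain ⟨h1, e1⟩ := hx
  obtain ⟨h2, e2⟩ := hx'
  rw [← e1, ← e2]

/-- A nonempty, connected, adjacency-closed set avoiding `K` is a full component support. -/
lemma supp_eq_of_closed {K : Set V} {T : Set V}
    (hdis : ∀ x ∈ T, x ∉ K)
    (hconn : ∀ x, ∀ hx : x ∈ T, ∀ y, ∀ hy : y ∈ T,
      G.componentComplMk (hdis x hx) = G.componentComplMk (hdis y hy))
    (hclosed : ∀ x ∈ T, ∀ y, G.Adj x y → y ∉ K → y ∈ T)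
    {x : V} (hx : x ∈ T) :
    (G.componentComplMk (hdis x hx)).supp = T := by
  apply Set.eq_of_subset_of_subset
  · rintro z ⟨hz, hzeq⟩
    -- z reachable from x within induce Kᶜ
    have hreach : (G.induce (Kᶜ : Set V)).Reachable ⟨x, hdis x hx⟩ ⟨z, hz⟩ := by
      have : G.componentComplMk (hdis x hx) = G.componentComplMk hz := hzeq.symm
      exact (SimpleGraph.ConnectedComponent.eq.mp this)
    obtain ⟨p⟩ := hreach
    -- induct on the walk
    clear hzeq
    suffices H : ∀ (a b : {v // v ∈ (Kᶜ : Set V)}) (p : (G.induce (Kᶜ : Set V)).Walk a b),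
        a.1 ∈ T → b.1 ∈ T by exact H _ _ p hx
    intro a b p
    induction p with
    | nil => exact fun h => h
    | @cons a c b h p ih =>
      exact fun ha => ih (hclosed _ ha _ h c.2)
  · intro y hy
    exact ⟨hdis y hy, (hconn y hy x hx)⟩

/-- Transfer of reachability along a graph map defined outside `M`. -/
lemma transfer_mk {A B : Type*} {X : SimpleGraph A} {Y : SimpleGraph B} {M : Set A} {S : Set B}
    (θ : A → B)
    (hadj : ∀ x y, x ∉ M → y ∉ M → X.Adj x y → Y.Adj (θ x) (θ y))
    (hmem : ∀ x, x ∉ M → θ x ∉ S) {a b : A} (ha : a ∉ M) (hb : b ∉ M)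
    (hr : (X.induce (Mᶜ : Set A)).Reachable ⟨a, ha⟩ ⟨b, hb⟩) :
    Y.componentComplMk (hmem a ha) = Y.componentComplMk (hmem b hb) := by
  obtain ⟨p⟩ := hr
  suffices H : ∀ (u v : {x // x ∈ (Mᶜ : Set A)}) (p : (X.induce (Mᶜ : Set A)).Walk u v),
      Y.componentComplMk (hmem u.1 u.2) = Y.componentComplMk (hmem v.1 v.2) by
    exact H _ _ p
  intro u v p
  induction p with
  | nil => rfl
  | @cons a c b h p ih =>
    exact (Y.componentComplMk_eq_of_adj _ _ (hadj _ _ a.2 c.2 h)).trans ih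

lemma reachable_of_mk_eq {A : Type*} {X : SimpleGraph A} {M : Set A} {a b : A}
    (ha : a ∉ M) (hb : b ∉ M)
    (h : X.componentComplMk ha = X.componentComplMk hb) :
    (X.induce (Mᶜ : Set A)).Reachable ⟨a, ha⟩ ⟨b, hb⟩ :=
  SimpleGraph.ConnectedComponent.eq.mp h

/-- Inverse-limit existence of ends satisfying a hom-closed predicate. -/
lemma exists_end_forall (G : SimpleGraph V) (hlf : ∀ v, (G.neighborSet v).Finite)
    (hc : G.Preconnected)
    (P : ∀ K : Finset V, Set (G.ComponentCompl (K : Set V)))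
    (hne : ∀ K, (P K).Nonempty)
    (hcl : ∀ (K L : Finset V) (h : (K : Set V) ⊆ (L : Set V)) (C : G.ComponentCompl (L : Set V)),
      C ∈ P L → C.hom h ∈ P K) :
    ∃ e : EndSpace G, ∀ K, e.1 K ∈ P K := by
  haveI : G.LocallyFinite := fun v => (hlf v).fintype
  haveI : Fact G.Preconnected := ⟨hc⟩
  let Q : (Finset V)ᵒᵖ ⥤ Type _ :=
    { obj := fun K => ↥(P K.unop)
      map := fun {K L} f => TypeCat.ofHom fun C =>
        ⟨(C.1).hom (by exact_mod_cast CategoryTheory.le_of_op_hom f),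
          hcl _ _ _ _ C.2⟩
      map_id := fun K => ConcreteCategory.hom_ext _ _ fun C => Subtype.ext (ComponentCompl.hom_refl _)
      map_comp := fun {K L M} f g => ConcreteCategory.hom_ext _ _ fun C => Subtype.ext
        (ComponentCompl.hom_trans C.1 (by exact_mod_cast CategoryTheory.le_of_op_hom f)
          (by exact_mod_cast CategoryTheory.le_of_op_hom g)) }
  haveI : ∀ K, Finite (Q.obj K) := fun K => Subtype.finite
  haveI : ∀ K, Nonempty (Q.obj K) := fun K => (hne K.unop).to_subtype
  obtain ⟨s, hs⟩ := nonempty_sections_of_finite_inverse_system Q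
  refine ⟨⟨fun K => (s (Opposite.op K)).1, ?_⟩, fun K => (s (Opposite.op K)).2⟩
  intro K L h
  exact congrArg Subtype.val (hs (CategoryTheory.opHomOfLE h))

/-- Pigeonhole: some component has infinite intersection with an infinite set. -/
lemma exists_componentCompl_infinite_inter (G : SimpleGraph V)
    (hlf : ∀ v, (G.neighborSet v).Finite) (hc : G.Preconnected)
    (K : Finset V) {T : Set V} (hT : T.Infinite) :
    ∃ C : G.ComponentCompl (K : Set V), (C.supp ∩ T).Infinite := by
  haveI : G.LocallyFinite := fun v => (hlf v).fintype
  haveI : Fact G.Preconnected := ⟨hc⟩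
  have h1 : (T \ (K : Set V)).Infinite := hT.diff K.finite_toSet
  haveI := h1.to_subtype
  haveI : Finite (G.ComponentCompl (K : Set V)) := G.componentCompl_finite K
  set f : (T \ (K : Set V) : Set V) → G.ComponentCompl (K : Set V) :=
    fun x => G.componentComplMk x.2.2 with hf
  obtain ⟨C, hC⟩ := Finite.exists_infinite_fiber f
  refine ⟨C, ?_⟩
  haveI := hC
  apply Set.infinite_of_injective_forall_mem
    (f := fun x : (f ⁻¹' {C} : Set _) => (x.1.1 : V))
  case hi => exact fun x y hxy => Subtype.ext (Subtype.ext hxy)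
  rintro ⟨⟨x, hx⟩, hfx⟩
  exact ⟨⟨hx.2, hfx⟩, hx.1⟩

lemma endBoundary_nonempty (G : SimpleGraph V)
    (hlf : ∀ v, (G.neighborSet v).Finite) (hc : G.Preconnected)
    {T : Set V} (hT : T.Infinite) : ∃ e : EndSpace G, e ∈ endBoundary G T := by
  obtain ⟨e, he⟩ := exists_end_forall G hlf hc
    (fun K => {C | (C.supp ∩ T).Infinite})
    (fun K => exists_componentCompl_infinite_inter G hlf hc K hT)
    (fun K L h C hC => hC.mono (Set.inter_subset_inter_left _ (C.subset_hom h)))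
  exact ⟨e, he⟩

/-- In a one-ended locally finite connected graph, the complement of the end's component
is finite. -/
lemma oneEnded_compl_finite (F : SimpleGraph W)
    (hlf : ∀ w, (F.neighborSet w).Finite) (hc : F.Preconnected)
    (e0 : EndSpace F) (h1 : ∀ e' : EndSpace F, e' = e0) (B : Finset W) :
    (((e0.1 B).supp)ᶜ : Set W).Finite := by
  by_contra hinf
  replace hinf : (((e0.1 B).supp)ᶜ : Set W).Infinite := hinf
  obtain ⟨e', he'⟩ := exists_end_forall F hlf hc
    (fun K => {C | (C.supp ∩ ((e0.1 B).supp)ᶜ).Infinite})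
    (fun K => exists_componentCompl_infinite_inter F hlf hc K hinf)
    (fun K L h C hC => hC.mono (Set.inter_subset_inter_left _ (C.subset_hom h)))
  have := he' B
  rw [h1 e'] at this
  have h2 : ((e0.1 B).supp ∩ ((e0.1 B).supp)ᶜ).Infinite := this
  rw [Set.inter_compl_self] at h2
  exact h2 Set.finite_empty

/-! ### The gluing sum -/

section Glue

variable {G : SimpleGraph V} {F : SimpleGraph W} {D : Set V} {ψ : V → W}

/-- Left inclusion into the gluing quotient. -/
noncomputable def gl (D : Set V) (ψ : V → W) : V → Quotient (glueSetoid D ψ) :=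
  fun v => Quotient.mk _ (Sum.inl v)

/-- Right inclusion into the gluing quotient. -/
noncomputable def gr (D : Set V) (ψ : V → W) : W → Quotient (glueSetoid D ψ) :=
  fun w => Quotient.mk _ (Sum.inr w)

lemma glue_mk_eq_mk {x y : V ⊕ W} :
    (Quotient.mk (glueSetoid D ψ) x = Quotient.mk (glueSetoid D ψ) y) ↔
      Sum.elim (fun v => if v ∈ D then Sum.inr (ψ v) else (Sum.inl v : V ⊕ W)) Sum.inr x =
      Sum.elim (fun v => if v ∈ D then Sum.inr (ψ v) else (Sum.inl v : V ⊕ W)) Sum.inr y := by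
  rw [Quotient.eq]
  rfl

lemma gr_inj : Function.Injective (gr D ψ) := by
  intro w w' h
  simp only [gr] at h
  rw [glue_mk_eq_mk] at h
  simpa using h

lemma gl_mem_D {v : V} (hv : v ∈ D) : gl D ψ v = gr D ψ (ψ v) := by
  simp only [gl, gr]
  rw [glue_mk_eq_mk]
  simp [hv]

lemma gl_eq_gr_iff {v : V} {w : W} : gl D ψ v = gr D ψ w ↔ v ∈ D ∧ ψ v = w := by
  simp only [gl, gr]
  rw [glue_mk_eq_mk]
  by_cases hv : v ∈ D <;> simp [hv]

lemma gl_inj (hψ : Set.InjOn ψ D) : Function.Injective (gl D ψ) := by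
  intro v v' h
  simp only [gl] at h
  rw [glue_mk_eq_mk] at h
  by_cases hv : v ∈ D <;> by_cases hv' : v' ∈ D <;> simp [hv, hv'] at h
  · exact hψ hv hv' h
  · exact h

lemma glue_surj (q : Quotient (glueSetoid D ψ)) :
    (∃ v, v ∉ D ∧ q = gl D ψ v) ∨ ∃ w, q = gr D ψ w := by
  induction q using Quotient.ind with
  | _ x =>
    cases x with
    | inl v =>
      by_cases hv : v ∈ D
      · exact Or.inr ⟨ψ v, (gl_mem_D hv : _)⟩
      · exact Or.inl ⟨v, hv, rfl⟩
    | inr w => exact Or.inr ⟨w, rfl⟩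

lemma gluingSum_adj_iff {a b : Quotient (glueSetoid D ψ)} :
    (gluingSum G F D ψ).Adj a b ↔ a ≠ b ∧
      ((∃ u v, G.Adj u v ∧ a = gl D ψ u ∧ b = gl D ψ v) ∨
       (∃ w x, F.Adj w x ∧ a = gr D ψ w ∧ b = gr D ψ x)) := by
  rw [gluingSum, SimpleGraph.fromRel_adj]
  constructor
  · rintro ⟨hne, h | h⟩ <;>
    · obtain ⟨x, y, hx, hy, hadj⟩ := h
      refine ⟨hne, ?_⟩
      rcases hadj with ⟨u, v, rfl, rfl, huv⟩ | ⟨u, v, rfl, rfl, huv⟩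
      · first
        | exact Or.inl ⟨u, v, huv, hx, hy⟩
        | exact Or.inl ⟨v, u, huv.symm, hy, hx⟩
      · first
        | exact Or.inr ⟨u, v, huv, hx, hy⟩
        | exact Or.inr ⟨v, u, huv.symm, hy, hx⟩
  · rintro ⟨hne, ⟨u, v, huv, rfl, rfl⟩ | ⟨w, x, hwx, rfl, rfl⟩⟩
    · exact ⟨hne, Or.inl ⟨Sum.inl u, Sum.inl v, rfl, rfl, Or.inl ⟨u, v, rfl, rfl, huv⟩⟩⟩
    · exact ⟨hne, Or.inl ⟨Sum.inr w, Sum.inr x, rfl, rfl, Or.inr ⟨w, x, rfl, rfl, hwx⟩⟩⟩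

lemma adj_gl (hψ : Set.InjOn ψ D) {u v : V} (h : G.Adj u v) :
    (gluingSum G F D ψ).Adj (gl D ψ u) (gl D ψ v) :=
  gluingSum_adj_iff.mpr ⟨fun he => h.ne (gl_inj hψ he), Or.inl ⟨u, v, h, rfl, rfl⟩⟩

lemma adj_gr {w x : W} (h : F.Adj w x) :
    (gluingSum G F D ψ).Adj (gr D ψ w) (gr D ψ x) :=
  gluingSum_adj_iff.mpr ⟨fun he => h.ne (gr_inj he), Or.inr ⟨w, x, h, rfl, rfl⟩⟩

lemma adj_gl_elim (hψ : Set.InjOn ψ D) {c : V} (hc : c ∉ D) {b : Quotient (glueSetoid D ψ)}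
    (h : (gluingSum G F D ψ).Adj (gl D ψ c) b) : ∃ u, G.Adj c u ∧ b = gl D ψ u := by
  rcases gluingSum_adj_iff.mp h with ⟨hne, ⟨u, v, huv, hu, hv⟩ | ⟨w, x, hwx, hw, hx⟩⟩
  · exact ⟨v, (gl_inj hψ hu) ▸ huv, hv⟩
  · exact absurd (gl_eq_gr_iff.mp hw).1 hc

end Glue

section Main

variable {G : SimpleGraph V} {F : SimpleGraph W} {D : Set V} {ψ : V → W}

/-- Lemma A: a `G`-component avoiding `D` is a full component of the gluing sum. -/
lemma suppA (hψ : Set.InjOn ψ D) {S : Set (Quotient (glueSetoid D ψ))} {K : Set V}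
    (hK : ∀ x : V, gl D ψ x ∈ S ↔ x ∈ K)
    {C : G.ComponentCompl K} (hCD : C.supp ∩ D = ∅)
    {c : V} (hc : c ∈ C.supp) (hcS : gl D ψ c ∉ S) :
    ((gluingSum G F D ψ).componentComplMk hcS).supp = gl D ψ '' C.supp := by
  have hdis : ∀ x ∈ gl D ψ '' C.supp, x ∉ S := by
    rintro x ⟨a, ha, rfl⟩ hx
    exact C.notMem_of_mem ha ((hK a).mp hx)
  have hconn : ∀ x, ∀ hx : x ∈ gl D ψ '' C.supp, ∀ y, ∀ hy : y ∈ gl D ψ '' C.supp,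
      (gluingSum G F D ψ).componentComplMk (hdis x hx) =
        (gluingSum G F D ψ).componentComplMk (hdis y hy) := by
    rintro x ⟨a, ha, rfl⟩ y ⟨b, hb, rfl⟩
    obtain ⟨haK, haC⟩ := ha
    obtain ⟨hbK, hbC⟩ := hb
    have hab : G.componentComplMk haK = G.componentComplMk hbK := haC.trans hbC.symm
    exact transfer_mk (X := G) (gl D ψ)
      (fun x y _ _ hxy => adj_gl hψ hxy)
      (fun x hx hx' => hx ((hK x).mp hx')) haK hbK
      (reachable_of_mk_eq haK hbK hab)
  have hclosed : ∀ x ∈ gl D ψ '' C.supp, ∀ y,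
      (gluingSum G F D ψ).Adj x y → y ∉ S → y ∈ gl D ψ '' C.supp := by
    rintro x ⟨a, ha, rfl⟩ y hadj hyS
    have haD : a ∉ D := fun haD => by
      have : a ∈ C.supp ∩ D := ⟨ha, haD⟩
      rw [hCD] at this
      exact this
    obtain ⟨u, hau, rfl⟩ := adj_gl_elim hψ haD hadj
    have huK : u ∉ K := fun h => hyS ((hK u).mpr h)
    exact ⟨u, ComponentCompl.mem_of_adj a u ha huK hau, rfl⟩
  exact supp_eq_of_closed hdis hconn hclosed ⟨c, hc, rfl⟩

/-- Part (a) of Lemma B : members of a component missing the `F`-side come from `V ∖ D`. -/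
lemma suppB_mem {S : Set (Quotient (glueSetoid D ψ))}
    {X : (gluingSum G F D ψ).ComponentCompl S}
    (hX : X.supp ∩ Set.range (gr D ψ) = ∅)
    {q : Quotient (glueSetoid D ψ)} (hq : q ∈ X.supp) : ∃ c, c ∉ D ∧ q = gl D ψ c := by
  rcases glue_surj q with ⟨v, hv, rfl⟩ | ⟨w, rfl⟩
  · exact ⟨v, hv, rfl⟩
  · exfalso
    have : gr D ψ w ∈ X.supp ∩ Set.range (gr D ψ) := ⟨hq, ⟨w, rfl⟩⟩
    rw [hX] at this
    exact this

/-- Lemma B: a component of the gluing sum missing the `F`-side is a `G`-component. -/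
lemma suppB (hψ : Set.InjOn ψ D) {S : Set (Quotient (glueSetoid D ψ))} {K : Set V}
    (hK : ∀ x : V, gl D ψ x ∈ S ↔ x ∈ K)
    {X : (gluingSum G F D ψ).ComponentCompl S}
    (hX : X.supp ∩ Set.range (gr D ψ) = ∅)
    {c : V} (hc : gl D ψ c ∈ X.supp) (hcK : c ∉ K) :
    (G.componentComplMk hcK).supp = gl D ψ ⁻¹' X.supp := by
  have hdis : ∀ x ∈ gl D ψ ⁻¹' X.supp, x ∉ K :=
    fun x hx hxK => X.notMem_of_mem hx ((hK x).mpr hxK)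
  have hclosed : ∀ x ∈ gl D ψ ⁻¹' X.supp, ∀ y, G.Adj x y → y ∉ K → y ∈ gl D ψ ⁻¹' X.supp := by
    intro x hx y hxy hyK
    exact ComponentCompl.mem_of_adj _ _ hx (fun h => hyK ((hK y).mp h)) (adj_gl hψ hxy)
  have hconn : ∀ x, ∀ hx : x ∈ gl D ψ ⁻¹' X.supp, ∀ y, ∀ hy : y ∈ gl D ψ ⁻¹' X.supp,
      G.componentComplMk (hdis x hx) = G.componentComplMk (hdis y hy) := by
    intro x hx y hy
    obtain ⟨hxS, hxmk⟩ := hx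
    obtain ⟨hyS, hymk⟩ := hy
    have hr := reachable_of_mk_eq hxS hyS (hxmk.trans hymk.symm)
    obtain ⟨p⟩ := hr
    -- walk induction back into G
    suffices Hind : ∀ (u v : {q // q ∈ (Sᶜ : Set (Quotient (glueSetoid D ψ)))})
        (p : ((gluingSum G F D ψ).induce (Sᶜ : Set _)).Walk u v)
        (hu : u.1 ∈ X.supp) (a b : V) (hua : u.1 = gl D ψ a) (hvb : v.1 = gl D ψ b)
        (haK : a ∉ K) (hbK : b ∉ K),
        G.componentComplMk haK = G.componentComplMk hbK by
      exact Hind ⟨gl D ψ x, hxS⟩ ⟨gl D ψ y, hyS⟩ p ⟨hxS, hxmk⟩ x y rfl rfl _ _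
    intro u v p
    induction p with
    | nil =>
      intro hu a b hua hvb haK hbK
      obtain rfl : a = b := gl_inj hψ (hua ▸ hvb ▸ rfl)
      rfl
    | @cons u m v hadj p ih =>
      intro hu a b hua hvb haK hbK
      have haD : a ∉ D := by
        intro haD
        have : u.1 ∈ X.supp ∩ Set.range (gr D ψ) := ⟨hu, ⟨ψ a, by rw [hua, gl_mem_D haD]⟩⟩
        rw [hX] at this
        exact this
      have hadj' : (gluingSum G F D ψ).Adj (gl D ψ a) m.1 := hua ▸ hadj
      obtain ⟨e, hae, hme⟩ := adj_gl_elim hψ haD hadj'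
      have hmX : m.1 ∈ X.supp := ComponentCompl.mem_of_adj u.1 m.1 hu m.2 (hua ▸ hadj')
      have heK : e ∉ K := fun h => m.2 (hme ▸ (hK e).mpr h)
      exact (G.componentComplMk_eq_of_adj haK heK hae).trans (ih hmX e b hme hvb heK hbK)
  exact supp_eq_of_closed hdis hconn hclosed ⟨hc.choose, hc.choose_spec⟩

/-- Lemma AF: `F`-reachability transfers to the gluing sum. -/
lemma suppAF {S : Set (Quotient (glueSetoid D ψ))} {B : Set W}
    (hB : ∀ w : W, gr D ψ w ∈ S ↔ w ∈ B)
    {C : F.ComponentCompl B} {w w' : W} (hw : w ∈ C.supp) (hw' : w' ∈ C.supp)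
    (hwS : gr D ψ w ∉ S) (hwS' : gr D ψ w' ∉ S) :
    (gluingSum G F D ψ).componentComplMk hwS = (gluingSum G F D ψ).componentComplMk hwS' := by
  obtain ⟨hwB, hwmk⟩ := hw
  obtain ⟨hwB', hwmk'⟩ := hw'
  exact transfer_mk (X := F) (gr D ψ)
    (fun x y _ _ hxy => adj_gr hxy)
    (fun x hx hx' => hx ((hB x).mp hx')) hwB hwB'
    (reachable_of_mk_eq hwB hwB' (hwmk.trans hwmk'.symm))

end Main

section Build

variable {G : SimpleGraph V} {F : SimpleGraph W} {D : Set V} {ψ : V → W}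

lemma transfer_G_mk (hψ : Set.InjOn ψ D) {M : Set V} {S : Set (Quotient (glueSetoid D ψ))}
    (hMS : ∀ x : V, x ∉ M → gl D ψ x ∉ S)
    {C : G.ComponentCompl M} {a b : V} (ha : a ∈ C.supp) (hb : b ∈ C.supp)
    (haM : a ∉ M) (hbM : b ∉ M) :
    (gluingSum G F D ψ).componentComplMk (hMS a haM) =
      (gluingSum G F D ψ).componentComplMk (hMS b hbM) := by
  obtain ⟨ha', hamk⟩ := ha
  obtain ⟨hb', hbmk⟩ := hb
  exact transfer_mk (X := G) (gl D ψ) (fun x y _ _ hxy => adj_gl hψ hxy) hMS haM hbM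
    (reachable_of_mk_eq haM hbM (by
      have : G.componentComplMk ha' = G.componentComplMk hb' := hamk.trans hbmk.symm
      exact this))

/-- The `F`-side preimage of a finite separator. -/
noncomputable def BS (D : Set V) (ψ : V → W) (S : Finset (Quotient (glueSetoid D ψ))) :
    Finset W := S.preimage (gr D ψ) (gr_inj.injOn)

lemma mem_BS {S : Finset (Quotient (glueSetoid D ψ))} {w : W} :
    w ∈ BS D ψ S ↔ gr D ψ w ∈ S := Finset.mem_preimage

lemma BS_mono {S S' : Finset (Quotient (glueSetoid D ψ))} (h : S ⊆ S') :
    BS D ψ S ⊆ BS D ψ S' := fun w hw => mem_BS.mpr (h (mem_BS.mp hw))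

variable (F) in
/-- Choice of a vertex in the `F`-end's component. -/
noncomputable def wS (e0 : EndSpace F) (S : Finset (Quotient (glueSetoid D ψ))) : W :=
  (e0.1 (BS D ψ S)).nonempty.some

lemma wS_mem (e0 : EndSpace F) (S : Finset (Quotient (glueSetoid D ψ))) :
    wS F e0 S ∈ (e0.1 (BS D ψ S)).supp :=
  (e0.1 (BS D ψ S)).nonempty.some_mem

lemma gr_not_mem_of_mem_supp {e0 : EndSpace F} {S : Finset (Quotient (glueSetoid D ψ))} {w : W}
    (hw : w ∈ (e0.1 (BS D ψ S)).supp) : gr D ψ w ∉ (S : Set (Quotient (glueSetoid D ψ))) := by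
  intro h
  exact (e0.1 (BS D ψ S)).notMem_of_mem hw (by exact_mod_cast mem_BS.mpr (by exact_mod_cast h))

lemma gr_wS_not_mem (e0 : EndSpace F) (S : Finset (Quotient (glueSetoid D ψ))) :
    gr D ψ (wS F e0 S) ∉ (S : Set (Quotient (glueSetoid D ψ))) :=
  gr_not_mem_of_mem_supp (wS_mem e0 S)

lemma hB_coe (S : Finset (Quotient (glueSetoid D ψ))) :
    ∀ w : W, gr D ψ w ∈ (S : Set (Quotient (glueSetoid D ψ))) ↔ w ∈ ((BS D ψ S : Finset W) : Set W) := by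
  intro w
  simp [mem_BS]

variable (G) in
/-- The end of the gluing sum corresponding to the unique end of `F`. -/
noncomputable def eFend (e0 : EndSpace F) : EndSpace (gluingSum G F D ψ) := by
  refine ⟨fun S => (gluingSum G F D ψ).componentComplMk (gr_wS_not_mem e0 S), ?_⟩
  intro S S' h
  rw [ComponentCompl.hom_mk]
  exact suppAF (hB_coe S) (supp_mono e0 (BS_mono h) (wS_mem e0 S')) (wS_mem e0 S) _ _

lemma eFend_val (e0 : EndSpace F) (S : Finset (Quotient (glueSetoid D ψ))) {w : W}
    (hw : w ∈ (e0.1 (BS D ψ S)).supp) :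
    (eFend G e0).1 S = (gluingSum G F D ψ).componentComplMk (gr_not_mem_of_mem_supp hw) :=
  (suppAF (hB_coe S) (wS_mem e0 S) hw _ _)

/-- The merging lemma: all but finitely many glued vertices lie in the `F`-side end. -/
lemma merge (hψ : Set.InjOn ψ D) (hFlf : ∀ w, (F.neighborSet w).Finite) (hFc : F.Preconnected)
    (e0 : EndSpace F) (he0 : ∀ e', e' = e0) (S : Finset (Quotient (glueSetoid D ψ))) :
    ∃ D₀ : Set V, D₀.Finite ∧ ∀ v ∈ D, v ∉ D₀ →
      gl D ψ v ∈ ((eFend G e0 : EndSpace (gluingSum G F D ψ)).1 S).supp := by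
  have hZ : (((e0.1 (BS D ψ S)).supp)ᶜ : Set W).Finite :=
    oneEnded_compl_finite F hFlf hFc e0 he0 (BS D ψ S)
  refine ⟨D ∩ ψ ⁻¹' (((e0.1 (BS D ψ S)).supp)ᶜ), ?_, ?_⟩
  · apply Set.Finite.of_finite_image (hZ.subset ?_) (hψ.mono Set.inter_subset_left)
    rintro _ ⟨x, ⟨-, hx⟩, rfl⟩
    exact hx
  · intro v hv hv0
    have hsupp : ψ v ∈ (e0.1 (BS D ψ S)).supp := by
      by_contra h
      exact hv0 ⟨hv, h⟩
    rw [eFend_val e0 S hsupp, gl_mem_D hv]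
    exact SimpleGraph.componentComplMk_mem _ _

/-- Choice of a finite set outside of which an end avoids `D`. -/
noncomputable def K1 (e : EndSpace G) (h : e ∉ endBoundary G D) : Finset V :=
  (not_forall.mp h).choose ∪
    (Set.not_infinite.mp (not_forall.mp h).choose_spec).toFinset

lemma K1_spec (e : EndSpace G) (h : e ∉ endBoundary G D) :
    ((e.1 (K1 e h)).supp ∩ D) = ∅ := by
  set K0 := (not_forall.mp h).choose with hK0
  have hfin : ((e.1 K0).supp ∩ D).Finite := Set.not_infinite.mp (not_forall.mp h).choose_spec
  apply Set.eq_empty_iff_forall_notMem.mpr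
  rintro x ⟨hx, hxD⟩
  have hsub : (e.1 (K1 e h)).supp ⊆ (e.1 K0).supp := supp_mono e Finset.subset_union_left
  have hxK1 : x ∉ (K1 e h : Set V) := (e.1 (K1 e h)).notMem_of_mem hx
  apply hxK1
  have : x ∈ (e.1 K0).supp ∩ D := ⟨hsub hx, hxD⟩
  simp only [K1, Finset.coe_union, Set.Finite.coe_toFinset]
  exact Or.inr (by simpa using this)

/-- The `G`-side preimage of a finite separator. -/
noncomputable def AS (hψ : Set.InjOn ψ D) (S : Finset (Quotient (glueSetoid D ψ))) : Finset V :=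
  S.preimage (gl D ψ) ((gl_inj hψ).injOn)

lemma mem_AS {hψ : Set.InjOn ψ D} {S : Finset (Quotient (glueSetoid D ψ))} {v : V} :
    v ∈ AS hψ S ↔ gl D ψ v ∈ S := Finset.mem_preimage

/-- The selector set for the image end. -/
noncomputable def LS (hψ : Set.InjOn ψ D) (e : EndSpace G) (h : e ∉ endBoundary G D)
    (S : Finset (Quotient (glueSetoid D ψ))) : Finset V :=
  K1 e h ∪ AS hψ S

lemma LS_supp_D (hψ : Set.InjOn ψ D) (e : EndSpace G) (h : e ∉ endBoundary G D)
    {M : Finset V} (hM : K1 e h ⊆ M) : (e.1 M).supp ∩ D = ∅ := by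
  apply Set.eq_empty_iff_forall_notMem.mpr
  rintro x ⟨hx, hxD⟩
  have : x ∈ (e.1 (K1 e h)).supp ∩ D := ⟨supp_mono e hM hx, hxD⟩
  rw [K1_spec e h] at this
  exact this

lemma gl_not_mem_of_supp (hψ : Set.InjOn ψ D) {e : EndSpace G}
    {S : Finset (Quotient (glueSetoid D ψ))} {M : Finset V} (hM : AS hψ S ⊆ M)
    {c : V} (hc : c ∈ (e.1 M).supp) : gl D ψ c ∉ (S : Set (Quotient (glueSetoid D ψ))) := by
  intro hS
  exact (e.1 M).notMem_of_mem hc (by exact_mod_cast hM (mem_AS.mpr (by exact_mod_cast hS)))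

/-- The image of an end avoiding the boundary, in the gluing sum. -/
noncomputable def PhiEnd (hψ : Set.InjOn ψ D) (F : SimpleGraph W) (e : EndSpace G)
    (h : e ∉ endBoundary G D) : EndSpace (gluingSum G F D ψ) := by
  refine ⟨fun S => (gluingSum G F D ψ).componentComplMk
    (gl_not_mem_of_supp hψ (Finset.subset_union_right)
      ((e.1 (LS hψ e h S)).nonempty.some_mem)), ?_⟩
  intro S S' hss
  rw [ComponentCompl.hom_mk]
  have hLL : LS hψ e h S ⊆ LS hψ e h S' := by
    apply Finset.union_subset_union (subset_refl _)
    intro v hv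
    exact mem_AS.mpr (hss (mem_AS.mp hv))
  have hmem' := supp_mono e hLL ((e.1 (LS hψ e h S')).nonempty.some_mem)
  have hmem := (e.1 (LS hψ e h S)).nonempty.some_mem
  exact transfer_G_mk hψ (M := ((LS hψ e h S : Finset V) : Set V)) (S := (S : Set _))
    (fun x hx hgl => hx (by
      exact_mod_cast Finset.subset_union_right (mem_AS.mpr (by exact_mod_cast hgl))))
    hmem' hmem ((e.1 (LS hψ e h S)).notMem_of_mem hmem')
    ((e.1 (LS hψ e h S)).notMem_of_mem hmem)

lemma AS_image (hψ : Set.InjOn ψ D) (M : Finset V) :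
    AS hψ (M.image (gl D ψ)) = M := by
  ext v
  rw [mem_AS, Finset.mem_image]
  exact ⟨fun ⟨a, ha, hav⟩ => (gl_inj hψ hav) ▸ ha, fun h => ⟨v, h, rfl⟩⟩

lemma AS_union (hψ : Set.InjOn ψ D) (S S' : Finset (Quotient (glueSetoid D ψ))) :
    AS hψ (S ∪ S') = AS hψ S ∪ AS hψ S' := by
  ext v
  simp [mem_AS]

variable (F) in
/-- The map from ends of `G` to ends of the gluing sum. -/
noncomputable def Psi (hψ : Set.InjOn ψ D) (e0 : EndSpace F) (e : EndSpace G) :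
    EndSpace (gluingSum G F D ψ) :=
  if h : e ∈ endBoundary G D then eFend G e0 else PhiEnd hψ F e h

lemma Psi_boundary (hψ : Set.InjOn ψ D) (e0 : EndSpace F) {e : EndSpace G}
    (h : e ∈ endBoundary G D) : Psi F hψ e0 e = eFend G e0 := dif_pos h

lemma Psi_val (hψ : Set.InjOn ψ D) (e0 : EndSpace F) {e : EndSpace G}
    (h : e ∉ endBoundary G D) (S : Finset (Quotient (glueSetoid D ψ))) {M : Finset V}
    (hM : LS hψ e h S ⊆ M) {c : V} (hc : c ∈ (e.1 M).supp)
    (hcS : gl D ψ c ∉ (S : Set (Quotient (glueSetoid D ψ)))) :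
    (Psi F hψ e0 e).1 S = (gluingSum G F D ψ).componentComplMk hcS := by
  rw [Psi, dif_neg h]
  show (gluingSum G F D ψ).componentComplMk _ = _
  have hmem := (e.1 (LS hψ e h S)).nonempty.some_mem
  have hc' : c ∈ (e.1 (LS hψ e h S)).supp := supp_mono e hM hc
  exact transfer_G_mk hψ (M := ((LS hψ e h S : Finset V) : Set V)) (S := (S : Set _))
    (fun x hx hgl => hx (by
      exact_mod_cast (Finset.subset_union_right : AS hψ S ⊆ LS hψ e h S)
        (mem_AS.mpr (by exact_mod_cast hgl))))
    hmem hc' ((e.1 (LS hψ e h S)).notMem_of_mem hmem)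
    ((e.1 (LS hψ e h S)).notMem_of_mem hc')

lemma hK_image (hψ : Set.InjOn ψ D) (M : Finset V) :
    ∀ x : V, gl D ψ x ∈ ((M.image (gl D ψ) : Finset _) : Set (Quotient (glueSetoid D ψ))) ↔
      x ∈ ((M : Finset V) : Set V) := by
  intro x
  simp only [Finset.coe_image, Set.mem_image, Finset.mem_coe]
  exact ⟨fun ⟨a, ha, hav⟩ => (gl_inj hψ hav) ▸ ha, fun h => ⟨x, h, rfl⟩⟩

/-- If `Psi e = Psi e'` with `e ∈ ∂D` and `e' ∉ ∂D`, contradiction. -/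
lemma Psi_ne_of_boundary (hψ : Set.InjOn ψ D) (e0 : EndSpace F) {e e' : EndSpace G}
    (he : e ∈ endBoundary G D) (he' : e' ∉ endBoundary G D) :
    Psi F hψ e0 e ≠ Psi F hψ e0 e' := by
  intro heq
  rw [Psi_boundary hψ e0 he] at heq
  set S : Finset (Quotient (glueSetoid D ψ)) := (K1 e' he').image (gl D ψ) with hS
  have hLS : LS hψ e' he' S = K1 e' he' := by
    rw [LS, hS, AS_image hψ, Finset.union_self]
  have hc := (e'.1 (LS hψ e' he' S)).nonempty.some_mem
  set c := (e'.1 (LS hψ e' he' S)).nonempty.some with hcdef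
  have hcS : gl D ψ c ∉ (S : Set (Quotient (glueSetoid D ψ))) :=
    gl_not_mem_of_supp hψ (Finset.subset_union_right) hc
  have hval : (Psi F hψ e0 e').1 S = (gluingSum G F D ψ).componentComplMk hcS :=
    Psi_val hψ e0 he' S (subset_refl _) hc hcS
  -- the component of `gl c` misses the `F` side entirely
  have hCD : (e'.1 (LS hψ e' he' S)).supp ∩ D = ∅ :=
    LS_supp_D hψ e' he' (hLS ▸ subset_refl _)
  have hsupp : ((gluingSum G F D ψ).componentComplMk hcS).supp
      = gl D ψ '' (e'.1 (LS hψ e' he' S)).supp := by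
    apply suppA hψ (K := ((LS hψ e' he' S : Finset V) : Set V)) _ hCD hc hcS
    rw [hLS, hS]
    exact hK_image hψ _
  -- but `Psi e = eFend` contains an `F`-side vertex
  have hwmem : gr D ψ (wS F e0 S) ∈ ((gluingSum G F D ψ).componentComplMk hcS).supp := by
    rw [← hval, ← heq]
    exact SimpleGraph.componentComplMk_mem _ _
  rw [hsupp] at hwmem
  obtain ⟨a, ha, hag⟩ := hwmem
  have : a ∈ D := (gl_eq_gr_iff.mp hag).1
  have : a ∈ (e'.1 (LS hψ e' he' S)).supp ∩ D := ⟨ha, this⟩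
  rw [hCD] at this
  exact this

lemma Psi_inj_aux (hψ : Set.InjOn ψ D) (e0 : EndSpace F) {e e' : EndSpace G}
    (he : e ∉ endBoundary G D) (he' : e' ∉ endBoundary G D)
    (heq : Psi F hψ e0 e = Psi F hψ e0 e') : e = e' := by
  apply Subtype.ext
  funext K
  set M : Finset V := K ∪ K1 e he ∪ K1 e' he' with hM
  set S : Finset (Quotient (glueSetoid D ψ)) := M.image (gl D ψ) with hS
  have hASM : AS hψ S = M := AS_image hψ M
  have hLSe : LS hψ e he S ⊆ M := by
    rw [LS, hASM]
    apply Finset.union_subset _ (subset_refl _)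
    intro x hx
    rw [hM]
    exact Finset.mem_union_left _ (Finset.mem_union_right _ hx)
  have hLSe' : LS hψ e' he' S ⊆ M := by
    rw [LS, hASM]
    apply Finset.union_subset _ (subset_refl _)
    intro x hx
    rw [hM]
    exact Finset.mem_union_right _ hx
  have hc := (e.1 M).nonempty.some_mem
  have hc' := (e'.1 M).nonempty.some_mem
  set c := (e.1 M).nonempty.some
  set c' := (e'.1 M).nonempty.some
  have hcS : gl D ψ c ∉ (S : Set (Quotient (glueSetoid D ψ))) := by
    intro hmem
    exact (e.1 M).notMem_of_mem hc (by exact_mod_cast (hK_image hψ M _).mp hmem)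
  have hcS' : gl D ψ c' ∉ (S : Set (Quotient (glueSetoid D ψ))) := by
    intro hmem
    exact (e'.1 M).notMem_of_mem hc' (by exact_mod_cast (hK_image hψ M _).mp hmem)
  have hval : (Psi F hψ e0 e).1 S = (gluingSum G F D ψ).componentComplMk hcS :=
    Psi_val hψ e0 he S hLSe hc hcS
  have hval' : (Psi F hψ e0 e').1 S = (gluingSum G F D ψ).componentComplMk hcS' :=
    Psi_val hψ e0 he' S hLSe' hc' hcS'
  have hmkeq : (gluingSum G F D ψ).componentComplMk hcS
      = (gluingSum G F D ψ).componentComplMk hcS' := by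
    rw [← hval, ← hval', heq]
  have hCD : (e.1 M).supp ∩ D = ∅ := LS_supp_D hψ e he (by
    intro x hx
    rw [hM]
    exact Finset.mem_union_left _ (Finset.mem_union_right _ hx))
  have hsupp : ((gluingSum G F D ψ).componentComplMk hcS).supp = gl D ψ '' (e.1 M).supp := by
    apply suppA hψ (K := ((M : Finset V) : Set V)) (hK_image hψ M) hCD hc hcS
  have hc'mem : gl D ψ c' ∈ gl D ψ '' (e.1 M).supp := by
    rw [← hsupp, hmkeq]
    exact SimpleGraph.componentComplMk_mem _ _
  obtain ⟨a, ha, hag⟩ := hc'mem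
  have hceq : c' ∈ (e.1 M).supp := (gl_inj hψ hag) ▸ ha
  have hMM : e.1 M = e'.1 M := eq_of_common_mem hceq hc'
  have h1 := e.2 K M (by rw [hM]; exact Finset.subset_union_left.trans Finset.subset_union_left)
  have h2 := e'.2 K M (by rw [hM]; exact Finset.subset_union_left.trans Finset.subset_union_left)
  rw [← h1, ← h2, hMM]

lemma eq_eFend_of_meets (hψ : Set.InjOn ψ D)
    (hFlf : ∀ w, (F.neighborSet w).Finite) (hFc : F.Preconnected)
    (e0 : EndSpace F) (he0 : ∀ e', e' = e0)
    (hend : EndSpace (gluingSum G F D ψ))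
    (hmeet : ∀ S : Finset (Quotient (glueSetoid D ψ)),
      ((hend.1 S).supp ∩ Set.range (gr D ψ)).Nonempty) :
    hend = eFend G e0 := by
  apply Subtype.ext
  funext S
  have hZ : (((e0.1 (BS D ψ S)).supp)ᶜ : Set W).Finite :=
    oneEnded_compl_finite F hFlf hFc e0 he0 (BS D ψ S)
  set S' : Finset (Quotient (glueSetoid D ψ)) := S ∪ hZ.toFinset.image (gr D ψ) with hS'
  obtain ⟨q, hq, w, rfl⟩ := hmeet S'
  have hw : w ∈ (e0.1 (BS D ψ S)).supp := by
    by_contra hnw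
    apply (hend.1 S').notMem_of_mem hq
    rw [hS']
    push_cast
    refine Or.inr ?_
    exact_mod_cast Finset.mem_image.mpr ⟨w, hZ.mem_toFinset.mpr hnw, rfl⟩
  have hsub : (hend.1 S').supp ⊆ (hend.1 S).supp := supp_mono hend Finset.subset_union_left
  have h1 : gr D ψ w ∈ (hend.1 S).supp := hsub hq
  rw [eFend_val e0 S hw]
  exact (eq_of_common_mem h1 (SimpleGraph.componentComplMk_mem _ _)).symm.symm

lemma exists_preimage_of_misses (hψ : Set.InjOn ψ D) (e0 : EndSpace F)
    (hend : EndSpace (gluingSum G F D ψ)) (S₀ : Finset (Quotient (glueSetoid D ψ)))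
    (hmiss : (hend.1 S₀).supp ∩ Set.range (gr D ψ) = ∅) :
    ∃ e : EndSpace G, Psi F hψ e0 e = hend := by
  classical
  set A₀ : Finset V := AS hψ S₀ with hA₀
  set SK : Finset V → Finset (Quotient (glueSetoid D ψ)) :=
    fun K => S₀ ∪ K.image (gl D ψ) with hSK
  have hSKmono : ∀ {K L : Finset V}, K ⊆ L → SK K ⊆ SK L := by
    intro K L h
    exact Finset.union_subset_union (subset_refl _) (Finset.image_subset_image h)
  have hXmiss : ∀ K : Finset V, (hend.1 (SK K)).supp ∩ Set.range (gr D ψ) = ∅ := by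
    intro K
    rw [← Set.subset_empty_iff, ← hmiss]
    exact Set.inter_subset_inter_left _ (supp_mono hend Finset.subset_union_left)
  have hex : ∀ K : Finset V, ∃ cc : V, cc ∉ D ∧ gl D ψ cc ∈ (hend.1 (SK K)).supp := by
    intro K
    obtain ⟨cc, hccD, hcc⟩ := suppB_mem (hXmiss K) (hend.1 (SK K)).nonempty.some_mem
    exact ⟨cc, hccD, hcc ▸ (hend.1 (SK K)).nonempty.some_mem⟩
  set c : Finset V → V := fun K => (hex K).choose with hcdef
  have hcD : ∀ K : Finset V, c K ∉ D ∧ gl D ψ (c K) ∈ (hend.1 (SK K)).supp :=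
    fun K => (hex K).choose_spec
  -- membership in the bigger support
  have hcbig : ∀ K : Finset V, gl D ψ (c (A₀ ∪ K)) ∈ (hend.1 (SK K)).supp :=
    fun K => supp_mono hend (hSKmono Finset.subset_union_right) (hcD (A₀ ∪ K)).2
  have hnotim : ∀ (K : Finset V) (x : V), gl D ψ x ∈ (hend.1 (SK K)).supp →
      x ∉ (K : Set V) := by
    intro K x hx hxK
    exact (hend.1 (SK K)).notMem_of_mem hx
      (by
        have : gl D ψ x ∈ K.image (gl D ψ) := Finset.mem_image.mpr ⟨x, hxK, rfl⟩
        exact_mod_cast Finset.mem_union_right _ this)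
  have prf : ∀ K : Finset V, c (A₀ ∪ K) ∉ (K : Set V) :=
    fun K => hnotim K _ (hcbig K)
  set f : ∀ K : Finset V, G.ComponentCompl (K : Set V) :=
    fun K => G.componentComplMk (prf K) with hfdef
  -- the support description
  have hK_SK : ∀ (K : Finset V), A₀ ⊆ K → ∀ x : V,
      gl D ψ x ∈ ((SK K : Finset _) : Set (Quotient (glueSetoid D ψ))) ↔ x ∈ (K : Set V) := by
    intro K hA x
    constructor
    · intro hx
      rcases Finset.mem_union.mp (by exact_mod_cast hx) with h | h
      · exact hA (by rw [hA₀]; exact mem_AS.mpr h)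
      · obtain ⟨a, ha, hax⟩ := Finset.mem_image.mp h
        exact_mod_cast (gl_inj hψ hax) ▸ ha
    · intro hx
      have : gl D ψ x ∈ K.image (gl D ψ) := Finset.mem_image.mpr ⟨x, by exact_mod_cast hx, rfl⟩
      exact_mod_cast Finset.mem_union_right _ this
  have hfsupp : ∀ (K : Finset V), A₀ ⊆ K →
      (f K).supp = gl D ψ ⁻¹' (hend.1 (SK K)).supp := by
    intro K hA
    exact suppB hψ (hK_SK K hA) (hXmiss K) (hcbig K) (prf K)
  -- compatibility
  have prfU : ∀ K : Finset V, c (A₀ ∪ K) ∉ ((A₀ ∪ K : Finset V) : Set V) := by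
    intro K
    intro hmem
    exact (hend.1 (SK (A₀ ∪ K))).notMem_of_mem (hcD (A₀ ∪ K)).2
      (by exact_mod_cast (hK_SK (A₀ ∪ K) Finset.subset_union_left _).mpr hmem)
  have hgsupp : ∀ K : Finset V,
      (G.componentComplMk (prfU K)).supp = gl D ψ ⁻¹' (hend.1 (SK (A₀ ∪ K))).supp :=
    fun K => suppB hψ (hK_SK (A₀ ∪ K) Finset.subset_union_left) (hXmiss (A₀ ∪ K))
      (hcD (A₀ ∪ K)).2 (prfU K)
  have hcompat : ∀ (K L : Finset V) (h : K ⊆ L),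
      (f L).hom (by exact_mod_cast h) = f K := by
    intro K L h
    have h1 : c (A₀ ∪ L) ∈ (G.componentComplMk (prfU K)).supp := by
      rw [hgsupp K]
      exact supp_mono hend (hSKmono (Finset.union_subset_union (subset_refl _) h)) (hcD (A₀ ∪ L)).2
    obtain ⟨hp, hmk⟩ := h1
    have step1 : (f L).hom (by exact_mod_cast h) = (G.componentComplMk hp).hom
        (by exact_mod_cast (Finset.subset_union_right : K ⊆ A₀ ∪ K)) := by
      rw [ComponentCompl.hom_mk, ComponentCompl.hom_mk]
    rw [step1, hmk]
    show (G.componentComplMk (prfU K)).hom _ = G.componentComplMk (prf K)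
    rw [ComponentCompl.hom_mk]
  set e : EndSpace G := ⟨f, hcompat⟩ with hedef
  have he : e ∉ endBoundary G D := by
    intro hbdry
    have h1 := hbdry A₀
    have h2 : (f A₀).supp ∩ D = ∅ := by
      apply Set.eq_empty_iff_forall_notMem.mpr
      rintro x ⟨hx, hxD⟩
      rw [hfsupp A₀ (subset_refl _)] at hx
      have : gl D ψ x ∈ (hend.1 (SK A₀)).supp ∩ Set.range (gr D ψ) :=
        ⟨hx, ⟨ψ x, (gl_mem_D hxD).symm⟩⟩
      rw [hXmiss A₀] at this
      exact this
    rw [show e.1 A₀ = f A₀ from rfl, h2] at h1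
    exact h1 Set.finite_empty
  refine ⟨e, ?_⟩
  apply Subtype.ext
  funext S
  set M : Finset V := K1 e he ∪ AS hψ S ∪ A₀ with hM
  have hA₀M : A₀ ⊆ M := Finset.subset_union_right
  have hASM : AS hψ S ⊆ M := fun x hx =>
    Finset.mem_union_left _ (Finset.mem_union_right _ hx)
  set S'' : Finset (Quotient (glueSetoid D ψ)) := S ∪ SK M with hS''
  have hMS'' : ∀ x : V, x ∉ (M : Set V) →
      gl D ψ x ∉ (S'' : Set (Quotient (glueSetoid D ψ))) := by
    intro x hx hmem
    rcases Finset.mem_union.mp (by exact_mod_cast hmem) with h | h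
    · exact hx (by exact_mod_cast hASM (mem_AS.mpr h))
    · exact hx (by exact_mod_cast (hK_SK M hA₀M x).mp (by exact_mod_cast h))
  -- the chosen vertex for `M`
  have hc_in_fM : c (A₀ ∪ M) ∈ (f M).supp := G.componentComplMk_mem (prf M)
  have hLSsub : LS hψ e he S'' ⊆ M := by
    apply Finset.union_subset
    · intro x hx
      rw [hM]
      exact Finset.mem_union_left _ (Finset.mem_union_left _ hx)
    · rw [hS'', AS_union hψ, hSK, AS_union hψ, AS_image hψ]
      refine Finset.union_subset hASM (Finset.union_subset ?_ (subset_refl _))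
      exact hA₀M
  have hcS'' : gl D ψ (c (A₀ ∪ M)) ∉ (S'' : Set (Quotient (glueSetoid D ψ))) := by
    apply hMS''
    exact (f M).notMem_of_mem hc_in_fM
  have hval : (Psi F hψ e0 e).1 S'' =
      (gluingSum G F D ψ).componentComplMk hcS'' :=
    Psi_val hψ e0 he S'' hLSsub hc_in_fM hcS''
  -- now identify `hend.1 S''` with the same component
  have hz := (hend.1 S'').nonempty.some_mem
  set z := (hend.1 S'').nonempty.some with hzdef
  have hzM : z ∈ (hend.1 (SK M)).supp := supp_mono hend Finset.subset_union_right hz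
  obtain ⟨d, hdD, hzd⟩ := suppB_mem (hXmiss M) hzM
  have hdf : d ∈ (f M).supp := by
    rw [hfsupp M hA₀M]
    exact Set.mem_preimage.mpr (hzd ▸ hzM)
  have hdS'' : gl D ψ d ∉ (S'' : Set (Quotient (glueSetoid D ψ))) :=
    hMS'' d ((f M).notMem_of_mem hdf)
  have htrans : (gluingSum G F D ψ).componentComplMk hdS'' =
      (gluingSum G F D ψ).componentComplMk hcS'' :=
    transfer_G_mk hψ (M := (M : Set V)) hMS'' hdf hc_in_fM
      ((f M).notMem_of_mem hdf) ((f M).notMem_of_mem hc_in_fM)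
  have hendval : hend.1 S'' = (gluingSum G F D ψ).componentComplMk hcS'' := by
    rw [← htrans]
    apply eq_of_common_mem (x := gl D ψ d) _ (SimpleGraph.componentComplMk_mem _ _)
    exact hzd ▸ hz
  -- push down from `S''` to `S`
  have hfinal1 := (Psi F hψ e0 e).2 S S'' Finset.subset_union_left
  have hfinal2 := hend.2 S S'' Finset.subset_union_left
  rw [← hfinal1, ← hfinal2, hval, hendval]

lemma Psi_continuous (hψ : Set.InjOn ψ D)
    (hFlf : ∀ w, (F.neighborSet w).Finite) (hFc : F.Preconnected)
    (e0 : EndSpace F) (he0 : ∀ e', e' = e0) :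
    Continuous (Psi (G := G) F hψ e0) := by
  apply Continuous.subtype_mk
  apply continuous_pi
  intro S
  apply IsLocallyConstant.continuous
  rw [IsLocallyConstant.iff_exists_open]
  intro e
  have hopen : ∀ M : Finset V, IsOpen {e' : EndSpace G | e'.1 M = e.1 M} := by
    intro M
    have h1 : Continuous (fun g : (∀ K : Finset V, G.ComponentCompl (K : Set V)) => g M) :=
      continuous_apply M
    have h2 : Continuous (fun e' : EndSpace G => e'.1) := continuous_subtype_val
    exact (h1.comp h2).isOpen_preimage {e.1 M} (isOpen_discrete _)
  by_cases h : e ∈ endBoundary G D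
  · -- boundary case
    obtain ⟨D₀, hD₀fin, hD₀⟩ := merge (G := G) hψ hFlf hFc e0 he0 S
    set M : Finset V := AS hψ S ∪ hD₀fin.toFinset with hMdef
    refine ⟨{e' | e'.1 M = e.1 M}, hopen M, rfl, ?_⟩
    intro e' hU
    show (Psi (G := G) F hψ e0 e').1 S = (Psi (G := G) F hψ e0 e).1 S
    by_cases he' : e' ∈ endBoundary G D
    · rw [Psi_boundary hψ e0 he', Psi_boundary hψ e0 h]
    · -- e' not in the boundary, but close to e
      have hMS : ∀ x : V, x ∉ (M : Set V) →
          gl D ψ x ∉ (S : Set (Quotient (glueSetoid D ψ))) := by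
        intro x hx hmem
        exact hx (by exact_mod_cast Finset.mem_union_left _ (mem_AS.mpr (by exact_mod_cast hmem)))
      obtain ⟨v, hvsupp, hvD⟩ := (h M).nonempty
      have hvM : v ∉ (M : Set V) := (e.1 M).notMem_of_mem hvsupp
      have hvD₀ : v ∉ D₀ := fun hv0 => hvM
        (by exact_mod_cast Finset.mem_union_right _ (hD₀fin.mem_toFinset.mpr hv0))
      have hglv : gl D ψ v ∈ ((eFend G e0).1 S).supp := hD₀ v hvD hvD₀
      set M' : Finset V := LS hψ e' he' S ∪ M with hM'def
      have hc := (e'.1 M').nonempty.some_mem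
      set cc := (e'.1 M').nonempty.some with hccdef
      have hccM : cc ∈ (e'.1 M).supp := supp_mono e' Finset.subset_union_right hc
      have hccMe : cc ∈ (e.1 M).supp := by rw [← hU]; exact hccM
      have hcS : gl D ψ cc ∉ (S : Set (Quotient (glueSetoid D ψ))) :=
        gl_not_mem_of_supp hψ
          ((Finset.subset_union_right : AS hψ S ⊆ LS hψ e' he' S).trans
            Finset.subset_union_left) hc
      have hval' : (Psi F hψ e0 e').1 S = (gluingSum G F D ψ).componentComplMk hcS :=
        Psi_val hψ e0 he' S Finset.subset_union_left hc hcS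
      have htr : (gluingSum G F D ψ).componentComplMk hcS =
          (gluingSum G F D ψ).componentComplMk (hMS v hvM) :=
        transfer_G_mk hψ (M := (M : Set V)) hMS hccMe hvsupp
          ((e.1 M).notMem_of_mem hccMe) hvM
      obtain ⟨hp, hmk⟩ := hglv
      rw [Psi_boundary hψ e0 h, hval', htr, ← hmk]
  · -- non-boundary case
    set M : Finset V := LS hψ e h S with hMdef
    refine ⟨{e' | e'.1 M = e.1 M}, hopen M, rfl, ?_⟩
    intro e' hU
    show (Psi (G := G) F hψ e0 e').1 S = (Psi (G := G) F hψ e0 e).1 S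
    have hU' : e'.1 M = e.1 M := hU
    have he' : e' ∉ endBoundary G D := by
      intro hb
      have h1 := hb M
      have h2 : (e'.1 M).supp ∩ D = ∅ := by
        rw [hU']
        exact LS_supp_D hψ e h Finset.subset_union_left
      rw [h2] at h1
      exact h1 Set.finite_empty
    set M' : Finset V := LS hψ e' he' S ∪ M with hM'def
    have hc := (e'.1 M').nonempty.some_mem
    set cc := (e'.1 M').nonempty.some with hccdef
    have hccM : cc ∈ (e'.1 M).supp := supp_mono e' Finset.subset_union_right hc
    have hccMe : cc ∈ (e.1 M).supp := by rw [← hU']; exact hccM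
    have hcS : gl D ψ cc ∉ (S : Set (Quotient (glueSetoid D ψ))) :=
      gl_not_mem_of_supp hψ
        ((Finset.subset_union_right : AS hψ S ⊆ LS hψ e' he' S).trans
          Finset.subset_union_left) hc
    have hval' : (Psi F hψ e0 e').1 S = (gluingSum G F D ψ).componentComplMk hcS :=
      Psi_val hψ e0 he' S Finset.subset_union_left hc hcS
    have hval : (Psi F hψ e0 e).1 S = (gluingSum G F D ψ).componentComplMk hcS :=
      Psi_val hψ e0 h S (by rw [hMdef]) hccMe hcS
    rw [hval, hval']

end Build

lemma isOpen_eval {G : SimpleGraph V} (K : Finset V) (C : G.ComponentCompl (K : Set V)) :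
    IsOpen {e : EndSpace G | e.1 K = C} := by
  have h1 : Continuous (fun g : (∀ K : Finset V, G.ComponentCompl (K : Set V)) => g K) :=
    continuous_apply K
  have h2 : Continuous (fun e' : EndSpace G => e'.1) := continuous_subtype_val
  exact (h1.comp h2).isOpen_preimage {C} (isOpen_discrete _)

lemma t2_endSpace (G : SimpleGraph V) : T2Space (EndSpace G) := by
  constructor
  intro x y hxy
  have hne : x.1 ≠ y.1 := fun h => hxy (Subtype.ext h)
  have hK : ∃ K, x.1 K ≠ y.1 K := by
    by_contra h
    push_neg at h
    exact hne (funext h)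
  obtain ⟨K, hK⟩ := hK
  refine ⟨{e | e.1 K = x.1 K}, {e | e.1 K = y.1 K}, isOpen_eval K _, isOpen_eval K _,
    rfl, rfl, ?_⟩
  rw [Set.disjoint_left]
  intro e he1 he2
  exact hK ((he1 : e.1 K = x.1 K).symm.trans (he2 : e.1 K = y.1 K))

lemma compact_endSpace (G : SimpleGraph V) (hlf : ∀ v, (G.neighborSet v).Finite)
    (hc : G.Preconnected) : CompactSpace (EndSpace G) := by
  haveI : G.LocallyFinite := fun v => (hlf v).fintype
  haveI : Fact G.Preconnected := ⟨hc⟩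
  haveI : ∀ K : Finset V, Finite (G.ComponentCompl (K : Set V)) :=
    fun K => G.componentCompl_finite K
  have hclosed : IsClosed {f : ∀ K : Finset V, G.ComponentCompl (K : Set V) |
      ∀ (K L : Finset V) (h : K ⊆ L), (f L).hom (by exact_mod_cast h) = f K} := by
    have : {f : ∀ K : Finset V, G.ComponentCompl (K : Set V) |
        ∀ (K L : Finset V) (h : K ⊆ L), (f L).hom (by exact_mod_cast h) = f K} =
        ⋂ (K : Finset V), ⋂ (L : Finset V), ⋂ (h : K ⊆ L),
          {f | (f L).hom (by exact_mod_cast h) = f K} := by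
      ext f
      simp only [Set.mem_iInter, Set.mem_setOf_eq]
    rw [this]
    refine isClosed_iInter fun K => isClosed_iInter fun L => isClosed_iInter fun h => ?_
    exact isClosed_eq ((continuous_of_discreteTopology).comp (continuous_apply L))
      (continuous_apply K)
  exact isCompact_iff_compactSpace.mp hclosed.isCompact

end GluingAux

open GluingAux in
/-- the end space of the gluing sum `G ⊕_ψ F` (with `F` one-ended and
`dom ψ` infinite) is homeomorphic to `Ω(G)` with the boundary of `dom ψ` collapsed. -/
theorem endSpace_gluingSum_homeomorph
    (G : SimpleGraph V) (F : SimpleGraph W)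
    (hGlf : ∀ v, (G.neighborSet v).Finite) (hFlf : ∀ w, (F.neighborSet w).Finite)
    (hGc : G.Connected) (hFc : F.Connected) (hF1 : OneEnded F)
    (D : Set V) (ψ : V → W) (hψ : Set.InjOn ψ D) (hD : D.Infinite) :
    Nonempty (EndSpace (gluingSum G F D ψ) ≃ₜ
      Quotient (collapseSetoid (endBoundary G D))) := by
  classical
  obtain ⟨e0, he0⟩ := hF1
  -- the lifted map
  have hsound : ∀ a b : EndSpace G, (collapseSetoid (endBoundary G D)).r a b →
      Psi F hψ e0 a = Psi F hψ e0 b := by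
    rintro a b (rfl | ⟨ha, hb⟩)
    · rfl
    · rw [Psi_boundary hψ e0 ha, Psi_boundary hψ e0 hb]
  let Φ : Quotient (collapseSetoid (endBoundary G D)) → EndSpace (gluingSum G F D ψ) :=
    Quotient.lift (Psi F hψ e0) hsound
  have hbij : Function.Bijective Φ := by
    constructor
    · intro q q'
      induction q using Quotient.inductionOn with
      | _ a =>
      induction q' using Quotient.inductionOn with
      | _ b =>
      intro hq
      have hq' : Psi F hψ e0 a = Psi F hψ e0 b := hq
      apply Quotient.sound
      by_cases ha : a ∈ endBoundary G D <;> by_cases hb : b ∈ endBoundary G D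
      · exact Or.inr ⟨ha, hb⟩
      · exact absurd hq' (Psi_ne_of_boundary hψ e0 ha hb)
      · exact absurd hq'.symm (Psi_ne_of_boundary hψ e0 hb ha)
      · exact Or.inl (Psi_inj_aux hψ e0 ha hb hq')
    · intro hend
      by_cases hex : ∃ S₀ : Finset (Quotient (glueSetoid D ψ)),
          (hend.1 S₀).supp ∩ Set.range (gr D ψ) = ∅
      · obtain ⟨S₀, hS₀⟩ := hex
        obtain ⟨e, he⟩ := exists_preimage_of_misses hψ e0 hend S₀ hS₀
        exact ⟨Quotient.mk _ e, he⟩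
      · push_neg at hex
        have hmeet : ∀ S : Finset (Quotient (glueSetoid D ψ)),
            ((hend.1 S).supp ∩ Set.range (gr D ψ)).Nonempty :=
          fun S => hex S
        have heq : hend = eFend G e0 :=
          eq_eFend_of_meets hψ hFlf hFc.preconnected e0 he0 hend hmeet
        obtain ⟨eb, heb⟩ := endBoundary_nonempty G hGlf hGc.preconnected hD
        refine ⟨Quotient.mk _ eb, ?_⟩
        show Psi F hψ e0 eb = hend
        rw [Psi_boundary hψ e0 heb, heq]
  have hcont : Continuous Φ :=
    (Psi_continuous hψ hFlf hFc.preconnected e0 he0).quotient_lift hsound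
  haveI : CompactSpace (EndSpace G) := compact_endSpace G hGlf hGc.preconnected
  haveI : T2Space (EndSpace (gluingSum G F D ψ)) := t2_endSpace _
  have hcont' : Continuous (Equiv.ofBijective Φ hbij) := hcont
  exact ⟨(Continuous.homeoOfEquivCompactToT2 hcont').symm⟩
end

section
/- Let G and F be locally finite connected graphs with F one-ended, and let ψ be a partial bijection from V(G) to V(F) with dom(ψ) infinite. If dom(ψ) is dense for Ω(G) (i.e., every end of G lies in the closure of dom(ψ)), then the gluing sum G ⊕_ψ F is one-ended. -/
open SimpleGraph

variable {V W U : Type*}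

open SimpleGraph CategoryTheory Opposite


section Aux

variable {X : Type*}

/-- Every infinite component outside a finite set extends to an end. -/
lemma exists_end_through' (G : SimpleGraph X) [G.LocallyFinite] [Fact G.Preconnected]
    [Infinite X] (K : Finset X) (C : G.ComponentCompl (K : Set X)) (hC : C.supp.Infinite) :
    ∃ e : G.end, e.1 (op K) = C := by
  classical
  set Fn := G.componentComplFunctor with hFn
  set s : Set (Fn.obj (op K)) := {C} with hs
  haveI : ∀ j, Nonempty ((Fn.toPreimages s).obj j) := by
    intro j
    rcases isEmpty_or_nonempty (j ⟶ op K) with h | ⟨⟨f⟩⟩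
    · obtain ⟨D⟩ : Nonempty (G.ComponentCompl (j.unop : Set X)) :=
        G.componentCompl_nonempty_of_infinite j.unop
      exact ⟨⟨D, Set.mem_iInter.2 fun f => h.elim f⟩⟩
    · have hKj : K ⊆ j.unop := le_of_op_hom f
      obtain ⟨D, hD⟩ := (C.infinite_iff_in_all_ranges.mp hC) j.unop hKj
      refine ⟨⟨D, Set.mem_iInter.2 fun f' => ?_⟩⟩
      exact hD
  haveI : ∀ j, Finite (Fn.obj j) :=
    fun j => (inferInstance : Finite (G.ComponentCompl (j.unop : Set X)))
  haveI : ∀ j, Finite ((Fn.toPreimages s).obj j) := fun j => Subtype.finite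
  obtain ⟨sec, hsec⟩ := nonempty_sections_of_finite_inverse_system (Fn.toPreimages s)
  refine ⟨⟨fun j => (sec j).1, fun {j k} f => congrArg Subtype.val (hsec f)⟩, ?_⟩
  have := Set.mem_iInter.mp (sec (op K)).2 (𝟙 (op K))
  have h' : (sec (op K)).1 ∈ ({C} : Set (Fn.obj (op K))) := by simpa [hs] using this
  exact h'

/-- Convert a mathlib end into an `EndSpace` element. -/
noncomputable def fromEnd (G : SimpleGraph X) (e : G.end) : EndSpace G :=
  ⟨fun K => e.1 (op K), fun K L h => e.2 (opHomOfLE h)⟩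

/-- An infinite set avoiding `K` meets some component of the complement of `K` infinitely. -/
lemma meets_componentCompl (G : SimpleGraph X) (K : Finset X)
    [Finite (G.ComponentCompl (K : Set X))]
    {S : Set X} (hS : S.Infinite) (hSK : ∀ x ∈ S, x ∉ (K : Set X)) :
    ∃ C : G.ComponentCompl (K : Set X), (S ∩ C.supp).Infinite := by
  by_contra h
  push_neg at h
  refine hS (Set.Finite.subset (Set.finite_iUnion h) ?_)
  intro x hx
  exact Set.mem_iUnion.2 ⟨G.componentComplMk (hSK x hx), hx, G.componentComplMk_mem _⟩

/-- In a one-ended graph, there is at most one infinite component outside any finite set. -/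
lemma oneEnded_unique_infinite (G : SimpleGraph X) [G.LocallyFinite] [Fact G.Preconnected]
    [Infinite X] (h1 : OneEnded G) (K : Finset X)
    {C C' : G.ComponentCompl (K : Set X)} (hC : C.supp.Infinite) (hC' : C'.supp.Infinite) :
    C = C' := by
  obtain ⟨e, he⟩ := exists_end_through' G K C hC
  obtain ⟨e', he'⟩ := exists_end_through' G K C' hC'
  obtain ⟨u, hu⟩ := h1
  have h2 : fromEnd G e = fromEnd G e' := (hu _).trans (hu _).symm
  have h3 : e.1 (op K) = e'.1 (op K) := congrArg (fun E => E.1 K) h2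
  rw [he, he'] at h3
  exact h3

/-- Two components sharing a vertex are equal. -/
lemma componentCompl_eq_of_mem {G : SimpleGraph X} {K : Set X}
    {C C' : G.ComponentCompl K} {x : X} (hx : x ∈ C.supp) (hx' : x ∈ C'.supp) : C = C' := by
  obtain ⟨h1, e1⟩ := hx
  obtain ⟨h2, e2⟩ := hx'
  exact e1.symm.trans e2

end Aux

/-- if `dom ψ` is dense for `Ω(G)`, then `G ⊕_ψ F` is one-ended. -/
theorem gluingSum_oneEnded
    (G : SimpleGraph V) (F : SimpleGraph W)
    (hGlf : ∀ v, (G.neighborSet v).Finite) (hFlf : ∀ w, (F.neighborSet w).Finite)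
    (hGc : G.Connected) (hFc : F.Connected) (hF1 : OneEnded F)
    (D : Set V) (ψ : V → W) (hψ : Set.InjOn ψ D) (hD : D.Infinite)
    (hdense : endBoundary G D = Set.univ) :
    OneEnded (gluingSum G F D ψ) := by
  classical
  haveI : G.LocallyFinite := fun v => (hGlf v).fintype
  haveI : F.LocallyFinite := fun w => (hFlf w).fintype
  haveI : Fact G.Preconnected := ⟨hGc.preconnected⟩
  haveI : Fact F.Preconnected := ⟨hFc.preconnected⟩
  haveI hVinf : Infinite V := Set.infinite_univ_iff.mp (hD.mono (Set.subset_univ _))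
  haveI hWinf : Infinite W := by
    by_contra hW
    rw [not_infinite_iff_finite] at hW
    haveI := hW
    haveI := Fintype.ofFinite W
    obtain ⟨e, -⟩ := hF1
    obtain ⟨w, hw, -⟩ := (e.1 Finset.univ).exists_eq_mk
    exact hw (by simp)
  set H := gluingSum G F D ψ with hH
  set ι : V → Quotient (glueSetoid D ψ) :=
    fun v => Quotient.mk (glueSetoid D ψ) (Sum.inl v) with hιdef
  set κ : W → Quotient (glueSetoid D ψ) :=
    fun w => Quotient.mk (glueSetoid D ψ) (Sum.inr w) with hκdef
  have hker : ∀ x y : V ⊕ W,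
      (Quotient.mk (glueSetoid D ψ) x = Quotient.mk (glueSetoid D ψ) y) ↔
      Sum.elim (fun v => if v ∈ D then Sum.inr (ψ v) else (Sum.inl v : V ⊕ W)) Sum.inr x
      = Sum.elim (fun v => if v ∈ D then Sum.inr (ψ v) else (Sum.inl v : V ⊕ W)) Sum.inr y :=
    fun x y => ⟨fun h => Quotient.exact h, fun h => Quotient.sound h⟩
  have hκinj : Function.Injective κ := by
    intro w w' h
    have h2 := (hker _ _).mp h
    simpa using h2
  have hιinj : Function.Injective ι := by
    intro v v' h
    have h2 := (hker _ _).mp h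
    by_cases hv : v ∈ D <;> by_cases hv' : v' ∈ D <;> simp [hv, hv'] at h2
    · exact hψ hv hv' h2
    · exact h2
  have hιD : ∀ v ∈ D, ι v = κ (ψ v) := fun v hv => (hker _ _).mpr (by simp [hv])
  have hadjκ : ∀ {w w' : W}, F.Adj w w' → H.Adj (κ w) (κ w') := by
    intro w w' h
    exact ⟨fun he => h.ne (hκinj he),
      Or.inl ⟨Sum.inr w, Sum.inr w', rfl, rfl, Or.inr ⟨w, w', rfl, rfl, h⟩⟩⟩
  have hadjι : ∀ {v v' : V}, G.Adj v v' → H.Adj (ι v) (ι v') := by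
    intro v v' h
    exact ⟨fun he => h.ne (hιinj he),
      Or.inl ⟨Sum.inl v, Sum.inl v', rfl, rfl, Or.inl ⟨v, v', rfl, rfl, h⟩⟩⟩
  have hsurj : ∀ q : Quotient (glueSetoid D ψ), (∃ v, q = ι v) ∨ (∃ w, q = κ w) := by
    refine Quotient.ind ?_
    rintro (v | w)
    · exact Or.inl ⟨v, rfl⟩
    · exact Or.inr ⟨w, rfl⟩
  have main : ∀ K : Finset (Quotient (glueSetoid D ψ)),
      ∃ C : H.ComponentCompl (K : Set (Quotient (glueSetoid D ψ))), C.supp.Infinite ∧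
        ∀ C' : H.ComponentCompl (K : Set (Quotient (glueSetoid D ψ))),
          C'.supp.Infinite → C' = C := by
    intro K
    set K_W : Finset W := K.preimage κ hκinj.injOn with hKWdef
    set K_V : Finset V := K.preimage ι hιinj.injOn with hKVdef
    have hKWcoe : (K_W : Set W) = κ ⁻¹' (K : Set (Quotient (glueSetoid D ψ))) :=
      Finset.coe_preimage _ _
    have hKVcoe : (K_V : Set V) = ι ⁻¹' (K : Set (Quotient (glueSetoid D ψ))) :=
      Finset.coe_preimage _ _
    have hWmem : ∀ {w : W}, w ∉ (K_W : Set W) →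
        κ w ∉ (K : Set (Quotient (glueSetoid D ψ))) := by
      intro w h hk
      rw [hKWcoe] at h
      exact h hk
    have hVmem : ∀ {v : V}, v ∉ (K_V : Set V) →
        ι v ∉ (K : Set (Quotient (glueSetoid D ψ))) := by
      intro v h hk
      rw [hKVcoe] at h
      exact h hk
    have mapκ : ∀ {w w' : W} (hw : w ∉ (K_W : Set W)) (hw' : w' ∉ (K_W : Set W)),
        F.componentComplMk hw = F.componentComplMk hw' →
        H.componentComplMk (hWmem hw) = H.componentComplMk (hWmem hw') := by
      intro w w' hw hw' h
      rw [SimpleGraph.ConnectedComponent.eq] at h ⊢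
      let φ : F.induce ((K_W : Set W))ᶜ →g
          H.induce ((K : Set (Quotient (glueSetoid D ψ))))ᶜ :=
        ⟨fun x => ⟨κ x.1, hWmem x.2⟩, fun {a b} hab => hadjκ hab⟩
      exact h.map φ
    have mapι : ∀ {v v' : V} (hv : v ∉ (K_V : Set V)) (hv' : v' ∉ (K_V : Set V)),
        G.componentComplMk hv = G.componentComplMk hv' →
        H.componentComplMk (hVmem hv) = H.componentComplMk (hVmem hv') := by
      intro v v' hv hv' h
      rw [SimpleGraph.ConnectedComponent.eq] at h ⊢
      let φ : G.induce ((K_V : Set V))ᶜ →g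
          H.induce ((K : Set (Quotient (glueSetoid D ψ))))ᶜ :=
        ⟨fun x => ⟨ι x.1, hVmem x.2⟩, fun {a b} hab => hadjι hab⟩
      exact h.map φ
    obtain ⟨CF, hCFinf, hCFuniq⟩ :
        ∃ CF : F.ComponentCompl (K_W : Set W), CF.supp.Infinite ∧
          ∀ C' : F.ComponentCompl (K_W : Set W), C'.supp.Infinite → C' = CF := by
      obtain ⟨CF, hCF⟩ := meets_componentCompl F K_W (K_W.finite_toSet.infinite_compl)
        (fun x hx => hx)
      have h1 : CF.supp.Infinite := hCF.mono Set.inter_subset_right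
      exact ⟨CF, h1, fun C' h' => oneEnded_unique_infinite F hF1 K_W h' h1⟩
    obtain ⟨w₀, hw₀⟩ := hCFinf.nonempty
    have hw₀K : w₀ ∉ (K_W : Set W) := ComponentCompl.notMem_of_mem hw₀
    set C₀ := H.componentComplMk (hWmem hw₀K) with hC₀def
    have hκCF : ∀ {w : W}, w ∈ CF.supp → κ w ∈ C₀.supp := by
      intro w hw
      have hwK : w ∉ (K_W : Set W) := ComponentCompl.notMem_of_mem hw
      obtain ⟨h1, e1⟩ := hw
      obtain ⟨h2, e2⟩ := hw₀
      exact ⟨hWmem hwK, mapκ hwK hw₀K (e1.trans e2.symm)⟩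
    have hC₀inf : C₀.supp.Infinite := by
      have h1 : (κ '' CF.supp).Infinite := hCFinf.image hκinj.injOn
      exact h1.mono (by rintro _ ⟨w, hw, rfl⟩; exact hκCF hw)
    have caseA : ∀ C' : H.ComponentCompl (K : Set (Quotient (glueSetoid D ψ))),
        (κ ⁻¹' C'.supp).Infinite → C' = C₀ := by
      intro C' hinf
      obtain ⟨DF, hDF⟩ := meets_componentCompl F K_W hinf
        (fun x hx => by rw [hKWcoe]; exact fun hk => ComponentCompl.notMem_of_mem hx hk)
      have hDFinf : DF.supp.Infinite := hDF.mono Set.inter_subset_right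
      have hDFCF : DF = CF := hCFuniq DF hDFinf
      obtain ⟨w, hwS, hwD⟩ := hDF.nonempty
      rw [hDFCF] at hwD
      exact componentCompl_eq_of_mem hwS (hκCF hwD)
    refine ⟨C₀, hC₀inf, ?_⟩
    intro C' hC'
    have hcover : C'.supp ⊆ Set.range ι ∪ Set.range κ := by
      intro q hq
      rcases hsurj q with ⟨v, rfl⟩ | ⟨w, rfl⟩
      · exact Or.inl ⟨v, rfl⟩
      · exact Or.inr ⟨w, rfl⟩
    have hsplit : (C'.supp ∩ Set.range ι).Infinite ∨ (C'.supp ∩ Set.range κ).Infinite := by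
      rw [← Set.infinite_union, ← Set.inter_union_distrib_left,
        Set.inter_eq_self_of_subset_left hcover]
      exact hC'
    rcases hsplit with hι | hκinf
    · have hSV : (ι ⁻¹' C'.supp).Infinite := fun hfin =>
        hι ((hfin.image ι).subset (by rw [Set.image_preimage_eq_inter_range]))
      obtain ⟨CG, hCG⟩ := meets_componentCompl G K_V hSV
        (fun x hx => by rw [hKVcoe]; exact fun hk => ComponentCompl.notMem_of_mem hx hk)
      have hCGinf : CG.supp.Infinite := hCG.mono Set.inter_subset_right
      obtain ⟨e, he⟩ := exists_end_through' G K_V CG hCGinf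
      have hdD : (CG.supp ∩ D).Infinite := by
        have h5 := Set.eq_univ_iff_forall.mp hdense (fromEnd G e)
        have h6 := h5 K_V
        rwa [show (fromEnd G e).1 K_V = CG from he] at h6
      obtain ⟨v₁, hv₁S, hv₁C⟩ := hCG.nonempty
      have hιCG : ∀ {v : V}, v ∈ CG.supp → ι v ∈ C'.supp := by
        intro v hv
        have hvK : v ∉ (K_V : Set V) := ComponentCompl.notMem_of_mem hv
        have hv₁K : v₁ ∉ (K_V : Set V) := ComponentCompl.notMem_of_mem hv₁C
        obtain ⟨h1, e1⟩ := hv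
        obtain ⟨h2, e2⟩ := hv₁C
        have h7 := mapι hvK hv₁K (e1.trans e2.symm)
        obtain ⟨h3, e3⟩ := hv₁S
        exact ⟨hVmem hvK, h7.trans e3⟩
      apply caseA C'
      have himg : ψ '' (CG.supp ∩ D) ⊆ κ ⁻¹' C'.supp := by
        rintro _ ⟨d, ⟨hdC, hdD'⟩, rfl⟩
        have h8 : ι d ∈ C'.supp := hιCG hdC
        rwa [hιD d hdD'] at h8
      exact (hdD.image (hψ.mono Set.inter_subset_right)).mono himg
    · apply caseA C'
      intro hfin
      exact hκinf ((hfin.image κ).subset (by rw [Set.image_preimage_eq_inter_range]))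
  choose f hfinf hfuniq using main
  refine ⟨⟨f, fun K L h => hfuniq K _ (ComponentCompl.hom_infinite _ _ (hfinf L))⟩, ?_⟩
  rintro ⟨g, hg⟩
  have hgf : ∀ K, g K = f K := by
    intro K
    apply hfuniq K
    rw [ComponentCompl.infinite_iff_in_all_ranges]
    intro L h
    exact ⟨g L, hg K L h⟩
  exact Subtype.ext (funext hgf)
end

section
/- Let G and F be locally finite connected graphs with F one-ended, and let ψ be a partial bijection from V(G) to V(F) with dom(ψ) infinite. If the set of ends in the closure of dom(ψ) equals exactly the set of non-free (limit) ends of G, then G ⊕_ψ F has at most one non-free end. -/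
open SimpleGraph

variable {V W U : Type*}

namespace GluingAux
open SimpleGraph Sum

variable {V W : Type*}

open Classical in
noncomputable def gfun (D : Set V) (ψ : V → W) : V ⊕ W → V ⊕ W :=
  Sum.elim (fun v => if v ∈ D then Sum.inr (ψ v) else (Sum.inl v : V ⊕ W)) Sum.inr

lemma glueSetoid_eq (D : Set V) (ψ : V → W) : glueSetoid D ψ = Setoid.ker (gfun D ψ) := rfl

/-- quotient map -/
noncomputable abbrev mkq (D : Set V) (ψ : V → W) (x : V ⊕ W) : Quotient (glueSetoid D ψ) :=
  Quotient.mk (glueSetoid D ψ) x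

variable {D : Set V} {ψ : V → W}

lemma mkq_eq_iff {x y : V ⊕ W} : mkq D ψ x = mkq D ψ y ↔ gfun D ψ x = gfun D ψ y :=
  ⟨fun h => Quotient.exact h, fun h => Quotient.sound h⟩

lemma gfun_inl_of_not_mem {v : V} (hv : v ∉ D) : gfun D ψ (inl v) = inl v := if_neg hv
lemma gfun_inl_of_mem {v : V} (hv : v ∈ D) : gfun D ψ (inl v) = inr (ψ v) := if_pos hv
lemma gfun_inr (w : W) : gfun D ψ (inr w) = inr w := rfl

lemma mkq_inl_injective (hψ : Set.InjOn ψ D) :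
    Function.Injective (fun v => mkq D ψ (inl v)) := by
  intro a b h
  rw [mkq_eq_iff] at h
  by_cases ha : a ∈ D <;> by_cases hb : b ∈ D
  · rw [gfun_inl_of_mem ha, gfun_inl_of_mem hb] at h
    exact hψ ha hb (inr_injective h)
  · rw [gfun_inl_of_mem ha, gfun_inl_of_not_mem hb] at h; simp at h
  · rw [gfun_inl_of_not_mem ha, gfun_inl_of_mem hb] at h; simp at h
  · rw [gfun_inl_of_not_mem ha, gfun_inl_of_not_mem hb] at h
    exact inl_injective h

lemma mkq_inr_injective : Function.Injective (fun w => mkq D ψ (inr w)) := by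
  intro a b h
  have h' : gfun D ψ (inr a) = gfun D ψ (inr b) := mkq_eq_iff.mp h
  rw [gfun_inr, gfun_inr] at h'
  exact inr_injective h'

lemma mkq_inl_mem {v : V} (hv : v ∈ D) : mkq D ψ (inl v) = mkq D ψ (inr (ψ v)) :=
  mkq_eq_iff.mpr (by rw [gfun_inl_of_mem hv, gfun_inr])

lemma exists_inl_of_not_inr {q : Quotient (glueSetoid D ψ)}
    (hq : q ∉ Set.range (fun w => mkq D ψ (inr w))) : ∃ v, v ∉ D ∧ q = mkq D ψ (inl v) := by
  obtain ⟨x, rfl⟩ := Quotient.exists_rep q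
  cases x with
  | inl v =>
    by_cases hv : v ∈ D
    · exact absurd ⟨ψ v, (mkq_inl_mem hv).symm⟩ hq
    · exact ⟨v, hv, rfl⟩
  | inr w => exact absurd ⟨w, rfl⟩ hq

lemma eq_inl_of_mkq_eq {v : V} (hv : v ∉ D) {x : V ⊕ W} (h : mkq D ψ x = mkq D ψ (inl v)) :
    x = inl v := by
  rw [mkq_eq_iff, gfun_inl_of_not_mem hv] at h
  cases x with
  | inl u =>
    by_cases hu : u ∈ D
    · rw [gfun_inl_of_mem hu] at h; simp at h
    · rw [gfun_inl_of_not_mem hu] at h; exact h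
  | inr w => rw [gfun_inr] at h; simp at h

end GluingAux
namespace GluingAux
open SimpleGraph Sum CategoryTheory

variable {V W : Type*}

lemma endSpace_supp_mono {G : SimpleGraph V} (e : EndSpace G) {K L : Finset V} (h : K ⊆ L) :
    ((e.1 L : G.ComponentCompl (L : Set V)) : Set V) ⊆ (e.1 K : Set V) := by
  have h2 := e.2 K L h
  rw [← h2]
  exact (e.1 L).subset_hom _

/-- bridging mathlib's ends with `EndSpace`. -/
noncomputable def endOfSection {G : SimpleGraph V} (s : G.end) : EndSpace G :=
  ⟨fun K => s.1 (Opposite.op K), fun K L h => s.2 (CategoryTheory.opHomOfLE h)⟩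

lemma OneEnded.infinite {G : SimpleGraph V} (h : OneEnded G) : Infinite V := by
  rcases h with ⟨e, -⟩
  rw [← not_finite_iff_infinite]
  intro hfin
  haveI := Fintype.ofFinite V
  obtain ⟨v, hv⟩ := (e.1 Finset.univ).nonempty
  exact (e.1 Finset.univ).notMem_of_mem hv (by simp)

lemma exists_endSpace_eq {G : SimpleGraph V} [LocallyFinite G] [Fact G.Preconnected]
    [Infinite V] (K : Finset V) (C : G.ComponentCompl (K : Set V)) (hC : C.supp.Infinite) :
    ∃ e : EndSpace G, e.1 K = C := by
  classical
  set Φ := G.componentComplFunctor with hΦ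
  haveI hfin : ∀ j, Finite (Φ.obj j) := fun j => G.componentCompl_finite j.unop
  haveI : ∀ j, Nonempty (Φ.obj j) := fun j => G.componentCompl_nonempty_of_infinite j.unop
  have hml : Φ.IsMittagLeffler := by
    apply Functor.isMittagLeffler_of_exists_finite_range
    intro j
    exact ⟨j, 𝟙 j, Set.finite_range _⟩
  have hCev : C ∈ Φ.eventualRange (Opposite.op K) :=
    (G.infinite_iff_in_eventualRange C).mp hC
  haveI : ∀ j, Nonempty (Φ.toEventualRanges.obj j) := fun j => Φ.toEventualRanges_nonempty hml j
  haveI : ∀ j, Finite (Φ.toEventualRanges.obj j) := fun j => Subtype.finite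
  obtain ⟨s, hs⟩ := Φ.toEventualRanges.eval_section_surjective_of_surjective
      (Φ.surjective_toEventualRanges hml) (Opposite.op K) ⟨C, hCev⟩
  refine ⟨endOfSection (Φ.toEventualRangesSectionsEquiv s), ?_⟩
  show ((Φ.toEventualRangesSectionsEquiv s).1 (Opposite.op K)) = C
  have : (Φ.toEventualRangesSectionsEquiv s).1 (Opposite.op K) = (s.1 (Opposite.op K)).1 := rfl
  rw [this]
  exact congrArg Subtype.val hs

lemma componentCompl_unique_of_oneEnded {G : SimpleGraph V} [LocallyFinite G]
    [Fact G.Preconnected] [Infinite V] (h1 : OneEnded G) (K : Finset V)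
    (C C' : G.ComponentCompl (K : Set V)) (hC : C.supp.Infinite) (hC' : C'.supp.Infinite) :
    C = C' := by
  obtain ⟨e, he⟩ := exists_endSpace_eq K C hC
  obtain ⟨e', he'⟩ := exists_endSpace_eq K C' hC'
  obtain ⟨e₀, h₀⟩ := h1
  rw [← he, ← he', h₀ e, h₀ e']

end GluingAux
namespace GluingAux
open SimpleGraph Sum

variable {V W : Type*} {G : SimpleGraph V} {F : SimpleGraph W} {D : Set V} {ψ : V → W}

lemma glue_adj_inl (hψ : Set.InjOn ψ D) {v v' : V} (h : G.Adj v v') :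
    (gluingSum G F D ψ).Adj (mkq D ψ (inl v)) (mkq D ψ (inl v')) := by
  rw [gluingSum, fromRel_adj]
  exact ⟨fun hc => h.ne (mkq_inl_injective hψ hc),
    Or.inl ⟨inl v, inl v', rfl, rfl, Or.inl ⟨v, v', rfl, rfl, h⟩⟩⟩

lemma glue_adj_inr {w w' : W} (h : F.Adj w w') :
    (gluingSum G F D ψ).Adj (mkq D ψ (inr w)) (mkq D ψ (inr w')) := by
  rw [gluingSum, fromRel_adj]
  exact ⟨fun hc => h.ne (mkq_inr_injective hc),
    Or.inl ⟨inr w, inr w', rfl, rfl, Or.inr ⟨w, w', rfl, rfl, h⟩⟩⟩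

lemma glue_adj_elim {v : V} (hv : v ∉ D) {b : Quotient (glueSetoid D ψ)}
    (h : (gluingSum G F D ψ).Adj (mkq D ψ (inl v)) b) :
    ∃ u, b = mkq D ψ (inl u) ∧ G.Adj v u := by
  rw [gluingSum, fromRel_adj] at h
  obtain ⟨-, ⟨x, y, hx, hy, hadj⟩ | ⟨x, y, hx, hy, hadj⟩⟩ := h
  · have hx' : x = inl v := eq_inl_of_mkq_eq hv hx.symm
    subst hx'
    rcases hadj with ⟨a, b', hab, hb', hGadj⟩ | ⟨a, b', hab, hb', hFadj⟩
    · obtain rfl : a = v := by injection hab.symm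
      exact ⟨b', by rw [hy, hb'], hGadj⟩
    · simp at hab
  · have hy' : y = inl v := eq_inl_of_mkq_eq hv hy.symm
    subst hy'
    rcases hadj with ⟨a, b', hab, hb', hGadj⟩ | ⟨a, b', hab, hb', hFadj⟩
    · obtain rfl : b' = v := by injection hb'.symm
      exact ⟨a, by rw [hx, hab], hGadj.symm⟩
    · simp at hb'

/-- walk transfer from the gluing sum into `G`, within a component avoiding the `F`-side -/
lemma walk_transfer_H_to_G (hψ : Set.InjOn ψ D) {N : Set (Quotient (glueSetoid D ψ))}
    {C : (gluingSum G F D ψ).ComponentCompl N}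
    (hC : ∀ q ∈ C, q ∉ Set.range (fun w => mkq D ψ (inr w)))
    {L : Set V} (hL : ∀ x ∈ L, mkq D ψ (inl x) ∈ N) :
    ∀ {a b : ↑Nᶜ} (_ : ((gluingSum G F D ψ).induce Nᶜ).Walk a b),
      (a : Quotient (glueSetoid D ψ)) ∈ C →
    ∀ {v u : V}, v ∉ D → u ∉ D → (a : Quotient (glueSetoid D ψ)) = mkq D ψ (inl v) →
      (b : Quotient (glueSetoid D ψ)) = mkq D ψ (inl u) →
      ∃ (h1 : v ∈ Lᶜ) (h2 : u ∈ Lᶜ), (G.induce Lᶜ).Reachable ⟨v, h1⟩ ⟨u, h2⟩ := by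
  intro a b p
  induction p with
  | nil =>
    rename_i a
    intro _ v u hv hu hav hbu
    have hvu : v = u := mkq_inl_injective hψ (hav ▸ hbu ▸ rfl : mkq D ψ (inl v) = mkq D ψ (inl u))
    subst hvu
    have h1 : v ∈ Lᶜ := fun hvL => (hav ▸ a.2 : (mkq D ψ (inl v) : _) ∈ Nᶜ) (hL v hvL)
    exact ⟨h1, h1, Reachable.refl _⟩
  | cons hadj p ih =>
    rename_i a c b
    intro haC v u hv hu hav hbu
    have hadj' : (gluingSum G F D ψ).Adj (a : Quotient (glueSetoid D ψ)) c := hadj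
    rw [hav] at hadj'
    obtain ⟨y, hcy, hGvy⟩ := glue_adj_elim hv hadj'
    have hcN : (c : Quotient (glueSetoid D ψ)) ∉ N := c.2
    have hcC : (c : Quotient (glueSetoid D ψ)) ∈ C :=
      ComponentCompl.mem_of_adj (a : Quotient (glueSetoid D ψ)) c haC hcN (hav ▸ hadj')
    have hyD : y ∉ D := fun hyd => hC _ hcC ⟨ψ y, by rw [hcy, mkq_inl_mem hyd]⟩
    obtain ⟨hy1, hu1, hreach⟩ := ih hcC hyD hu hcy hbu
    have h1 : v ∈ Lᶜ := fun hvL => (hav ▸ a.2 : (mkq D ψ (inl v) : _) ∈ Nᶜ) (hL v hvL)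
    have hadjL : (G.induce Lᶜ).Adj ⟨v, h1⟩ ⟨y, hy1⟩ := hGvy
    exact ⟨h1, hu1, hadjL.reachable.trans hreach⟩

end GluingAux
namespace GluingAux
open SimpleGraph Sum

variable {V W : Type*} {G : SimpleGraph V} {F : SimpleGraph W} {D : Set V} {ψ : V → W}

lemma comp_transfer (hψ : Set.InjOn ψ D) {N : Set (Quotient (glueSetoid D ψ))}
    {C : (gluingSum G F D ψ).ComponentCompl N}
    (hC : ∀ q ∈ C, q ∉ Set.range (fun w => mkq D ψ (inr w)))
    {L : Set V} (hL : ∀ x ∈ L, mkq D ψ (inl x) ∈ N)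
    {v u : V} (hv : v ∉ D) (hu : u ∉ D)
    (hvC : mkq D ψ (inl v) ∈ C) (huC : mkq D ψ (inl u) ∈ C)
    (hvL : v ∉ L) (huL : u ∉ L) :
    G.componentComplMk hvL = G.componentComplMk huL := by
  obtain ⟨hvN, hveq⟩ := hvC
  obtain ⟨huN, hueq⟩ := huC
  have hreach : ((gluingSum G F D ψ).induce Nᶜ).Reachable ⟨_, hvN⟩ ⟨_, huN⟩ :=
    ConnectedComponent.exact (hveq.trans hueq.symm)
  obtain ⟨p⟩ := hreach
  obtain ⟨h1, h2, hr⟩ := walk_transfer_H_to_G hψ hC hL p (⟨hvN, hveq⟩ : _ ∈ C) hv hu rfl rfl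
  rw [ConnectedComponent.eq]
  exact hr

lemma walk_transfer_G_to_H (hψ : Set.InjOn ψ D)
    {N : Set (Quotient (glueSetoid D ψ))} {L : Set V}
    (hL : ∀ x : V, mkq D ψ (inl x) ∈ N → x ∈ L) :
    ∀ {a b : ↑Lᶜ} (_ : (G.induce Lᶜ).Walk a b),
      ∃ (g1 : mkq D ψ (inl (a : V)) ∈ Nᶜ) (g2 : mkq D ψ (inl (b : V)) ∈ Nᶜ),
        ((gluingSum G F D ψ).induce Nᶜ).Reachable ⟨_, g1⟩ ⟨_, g2⟩ := by
  intro a b p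
  induction p with
  | nil =>
    rename_i a
    have g1 : mkq D ψ (inl (a : V)) ∈ Nᶜ := fun hmem => a.2 (hL _ hmem)
    exact ⟨g1, g1, Reachable.refl _⟩
  | cons hadj p ih =>
    rename_i a c b
    obtain ⟨g2, g3, hreach⟩ := ih
    have g1 : mkq D ψ (inl (a : V)) ∈ Nᶜ := fun hmem => a.2 (hL _ hmem)
    have hadj' : ((gluingSum G F D ψ).induce Nᶜ).Adj ⟨_, g1⟩ ⟨_, g2⟩ :=
      glue_adj_inl hψ hadj
    exact ⟨g1, g3, hadj'.reachable.trans hreach⟩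

lemma walk_transfer_F_to_H {N : Set (Quotient (glueSetoid D ψ))} {S : Set W}
    (hS : ∀ w : W, mkq D ψ (inr w) ∈ N → w ∈ S) :
    ∀ {a b : ↑Sᶜ} (_ : (F.induce Sᶜ).Walk a b),
      ∃ (g1 : mkq D ψ (inr (a : W)) ∈ Nᶜ) (g2 : mkq D ψ (inr (b : W)) ∈ Nᶜ),
        ((gluingSum G F D ψ).induce Nᶜ).Reachable ⟨_, g1⟩ ⟨_, g2⟩ := by
  intro a b p
  induction p with
  | nil =>
    rename_i a
    have g1 : mkq D ψ (inr (a : W)) ∈ Nᶜ := fun hmem => a.2 (hS _ hmem)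
    exact ⟨g1, g1, Reachable.refl _⟩
  | cons hadj p ih =>
    rename_i a c b
    obtain ⟨g2, g3, hreach⟩ := ih
    have g1 : mkq D ψ (inr (a : W)) ∈ Nᶜ := fun hmem => a.2 (hS _ hmem)
    have hadj' : ((gluingSum G F D ψ).induce Nᶜ).Adj ⟨_, g1⟩ ⟨_, g2⟩ :=
      glue_adj_inr hadj
    exact ⟨g1, g3, hadj'.reachable.trans hreach⟩

end GluingAux
namespace GluingAux
open SimpleGraph Sum

attribute [local instance] Classical.propDecidable

variable {V W : Type*} {G : SimpleGraph V} {F : SimpleGraph W} {D : Set V} {ψ : V → W}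

/-- image of a finite vertex set of `G` in the gluing sum -/
noncomputable def mklF (D : Set V) (ψ : V → W) (L : Finset V) :
    Finset (Quotient (glueSetoid D ψ)) :=
  L.image (fun v => mkq D ψ (inl v))

lemma mem_mklF {L : Finset V} {x : V} (hx : x ∈ L) : mkq D ψ (inl x) ∈ mklF D ψ L :=
  Finset.mem_image_of_mem _ hx

lemma mklF_mono {K L : Finset V} (h : K ⊆ L) : mklF D ψ K ⊆ mklF D ψ L :=
  Finset.image_subset_image h

/-- the independence lemma: within a component of the gluing sum avoiding the `F`-side,
all pure `G`-vertices determine the same component of `G`. -/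
lemma glue_indep (hψ : Set.InjOn ψ D) {M : Finset (Quotient (glueSetoid D ψ))}
    {C : (gluingSum G F D ψ).ComponentCompl (M : Set (Quotient (glueSetoid D ψ)))}
    (hC : ∀ q ∈ C, q ∉ Set.range (fun w => mkq D ψ (inr w)))
    {L : Finset V} (hL : ∀ x ∈ L, mkq D ψ (inl x) ∈ M)
    {v u : V} (hv : v ∉ D) (hu : u ∉ D)
    (hvC : mkq D ψ (inl v) ∈ C) (huC : mkq D ψ (inl u) ∈ C)
    (hvL : v ∉ (L : Set V)) (huL : u ∉ (L : Set V)) :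
    G.componentComplMk hvL = G.componentComplMk huL :=
  comp_transfer hψ hC (fun x hx => hL x hx) hv hu hvC huC hvL huL

lemma liftEnd_exists (e : EndSpace (gluingSum G F D ψ))
    {B : Finset (Quotient (glueSetoid D ψ))}
    (hB : ∀ q ∈ e.1 B, q ∉ Set.range (fun w => mkq D ψ (inr w)))
    {M : Finset (Quotient (glueSetoid D ψ))} (hBM : B ⊆ M) (L : Finset V) :
    ∃ v : V, v ∉ D ∧ mkq D ψ (inl v) ∈ e.1 (M ∪ mklF D ψ L) ∧ v ∉ (L : Set V) := by
  obtain ⟨q, hq⟩ := (e.1 (M ∪ mklF D ψ L)).nonempty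
  have hqB : q ∈ (e.1 B : Set _) :=
    endSpace_supp_mono e (hBM.trans Finset.subset_union_left) hq
  obtain ⟨v, hvD, rfl⟩ := exists_inl_of_not_inr (hB q hqB)
  refine ⟨v, hvD, hq, fun hvL => ?_⟩
  exact (e.1 (M ∪ mklF D ψ L)).notMem_of_mem hq
    (by exact_mod_cast Finset.mem_union_right _ (mem_mklF hvL))

/-- The end of `G` obtained from an end of the gluing sum whose components eventually avoid
the `F`-side. -/
noncomputable def liftEnd (hψ : Set.InjOn ψ D) (e : EndSpace (gluingSum G F D ψ))
    (B : Finset (Quotient (glueSetoid D ψ)))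
    (hB : ∀ q ∈ e.1 B, q ∉ Set.range (fun w => mkq D ψ (inr w))) : EndSpace G := by
  refine ⟨fun L => G.componentComplMk
      (liftEnd_exists e hB (Finset.Subset.refl B) L).choose_spec.2.2, ?_⟩
  intro K L h
  set vL := (liftEnd_exists e hB (Finset.Subset.refl B) L).choose with hvL
  obtain ⟨hvLD, hvLmem, hvLnot⟩ := (liftEnd_exists e hB (Finset.Subset.refl B) L).choose_spec
  set vK := (liftEnd_exists e hB (Finset.Subset.refl B) K).choose with hvK
  obtain ⟨hvKD, hvKmem, hvKnot⟩ := (liftEnd_exists e hB (Finset.Subset.refl B) K).choose_spec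
  have hsub : B ∪ mklF D ψ K ⊆ B ∪ mklF D ψ L :=
    Finset.union_subset_union (Finset.Subset.refl B) (mklF_mono h)
  have hvLmem' : mkq D ψ (inl vL) ∈ (e.1 (B ∪ mklF D ψ K) : Set _) :=
    endSpace_supp_mono e hsub hvLmem
  have hC : ∀ q ∈ e.1 (B ∪ mklF D ψ K), q ∉ Set.range (fun w => mkq D ψ (inr w)) :=
    fun q hq => hB q (endSpace_supp_mono e Finset.subset_union_left hq)
  have hL' : ∀ x ∈ K, mkq D ψ (inl x) ∈ B ∪ mklF D ψ K :=
    fun x hx => Finset.mem_union_right _ (mem_mklF hx)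
  have hvLK : vL ∉ (K : Set V) := fun hmem =>
    (e.1 (B ∪ mklF D ψ K)).notMem_of_mem hvLmem'
      (by exact_mod_cast Finset.mem_union_right _ (mem_mklF hmem))
  have key : G.componentComplMk hvLK = G.componentComplMk hvKnot :=
    glue_indep hψ hC hL' hvLD hvKD hvLmem' hvKmem hvLK hvKnot
  rw [ComponentCompl.hom_mk]
  exact key

lemma liftEnd_rep (hψ : Set.InjOn ψ D) (e : EndSpace (gluingSum G F D ψ))
    (B : Finset (Quotient (glueSetoid D ψ)))
    (hB : ∀ q ∈ e.1 B, q ∉ Set.range (fun w => mkq D ψ (inr w))) (L : Finset V) :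
    ∃ v : V, v ∉ D ∧ mkq D ψ (inl v) ∈ e.1 (B ∪ mklF D ψ L) ∧
      ∃ h : v ∉ (L : Set V), (liftEnd hψ e B hB).1 L = G.componentComplMk h := by
  obtain ⟨hvD, hvmem, hvnot⟩ := (liftEnd_exists e hB (Finset.Subset.refl B) L).choose_spec
  exact ⟨_, hvD, hvmem, hvnot, rfl⟩

/-- characterisation of the value of `liftEnd`. -/
lemma liftEnd_eq (hψ : Set.InjOn ψ D) (e : EndSpace (gluingSum G F D ψ))
    {B : Finset (Quotient (glueSetoid D ψ))}
    (hB : ∀ q ∈ e.1 B, q ∉ Set.range (fun w => mkq D ψ (inr w)))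
    {L : Finset V} {M : Finset (Quotient (glueSetoid D ψ))} (hM : B ∪ mklF D ψ L ⊆ M)
    {v : V} (hv : v ∉ D) (hvM : mkq D ψ (inl v) ∈ e.1 M) (hvL : v ∉ (L : Set V)) :
    (liftEnd hψ e B hB).1 L = G.componentComplMk hvL := by
  obtain ⟨u, huD, humem, huL, hval⟩ := liftEnd_rep hψ e B hB L
  rw [hval]
  have hC : ∀ q ∈ e.1 (B ∪ mklF D ψ L), q ∉ Set.range (fun w => mkq D ψ (inr w)) :=
    fun q hq => hB q (endSpace_supp_mono e Finset.subset_union_left hq)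
  have hL' : ∀ x ∈ L, mkq D ψ (inl x) ∈ B ∪ mklF D ψ L :=
    fun x hx => Finset.mem_union_right _ (mem_mklF hx)
  have hvmem' : mkq D ψ (inl v) ∈ (e.1 (B ∪ mklF D ψ L) : Set _) :=
    endSpace_supp_mono e hM hvM
  exact glue_indep hψ hC hL' huD hv humem hvmem' huL hvL

end GluingAux
namespace GluingAux
open SimpleGraph Sum

attribute [local instance] Classical.propDecidable

variable {V W : Type*} {G : SimpleGraph V} {F : SimpleGraph W} {D : Set V} {ψ : V → W}

/-- Lemma A: every non-free end of the gluing sum meets the `F`-side infinitely often. -/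
lemma limit_end_meets_inr (hψ : Set.InjOn ψ D)
    (hlim : endBoundary G D = {e : EndSpace G | ¬ IsFreeEnd e})
    (e : EndSpace (gluingSum G F D ψ)) (he : ¬ IsFreeEnd e)
    (K : Finset (Quotient (glueSetoid D ψ))) :
    ((e.1 K : Set (Quotient (glueSetoid D ψ))) ∩
      Set.range (fun w => mkq D ψ (inr w))).Infinite := by
  by_contra hfin
  rw [Set.not_infinite] at hfin
  apply he
  -- enlarge K to K₁ so that the component avoids the F-side entirely
  set K₁ : Finset (Quotient (glueSetoid D ψ)) := K ∪ hfin.toFinset with hK₁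
  have hKK₁ : K ⊆ K₁ := Finset.subset_union_left
  have hB : ∀ q ∈ e.1 K₁, q ∉ Set.range (fun w => mkq D ψ (inr w)) := by
    intro q hq hr
    have hqK : q ∈ (e.1 K : Set _) := endSpace_supp_mono e hKK₁ hq
    have hqK₁ : q ∈ (K₁ : Set _) := by
      rw [hK₁]
      push_cast
      exact Or.inr (by rw [Set.Finite.coe_toFinset]; exact ⟨hqK, hr⟩)
    exact (e.1 K₁).notMem_of_mem hq hqK₁
  -- the pullback of K₁ to V
  have hLKfin : ((fun v => mkq D ψ (inl v)) ⁻¹' (K₁ : Set _)).Finite :=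
    Set.Finite.preimage (mkq_inl_injective hψ).injOn K₁.finite_toSet
  set LK : Finset V := hLKfin.toFinset with hLK
  have hmemLK : ∀ x : V, x ∈ LK ↔ mkq D ψ (inl x) ∈ K₁ := by
    intro x
    rw [hLK, Set.Finite.mem_toFinset]
    exact Iff.rfl
  -- the end of G obtained from e
  set ebar : EndSpace G := liftEnd hψ e K₁ hB with hebar
  -- the component of ebar outside LK avoids D
  have hD0 : ((ebar.1 LK).supp ∩ D) = ∅ := by
    rw [Set.eq_empty_iff_forall_notMem]
    rintro d ⟨hd1, hd2⟩
    obtain ⟨v₀, hv₀D, hv₀mem, hv₀L, hval⟩ := liftEnd_rep hψ e K₁ hB LK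
    obtain ⟨hdLK, hdeq⟩ := hd1
    rw [hval] at hdeq
    obtain ⟨p⟩ := ConnectedComponent.exact hdeq
    obtain ⟨g1, g2, hreach⟩ := walk_transfer_G_to_H (F := F) hψ
      (N := (K₁ : Set _)) (L := (LK : Set V))
      (fun x hx => by rw [Finset.mem_coe, hmemLK]; exact_mod_cast hx) p
    -- mkq (inl v₀) lies in e.1 K₁
    have hv₀K₁ : mkq D ψ (inl v₀) ∈ (e.1 K₁ : Set _) :=
      endSpace_supp_mono e Finset.subset_union_left hv₀mem
    obtain ⟨hN, heq⟩ := hv₀K₁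
    -- hence mkq (inl d) lies in e.1 K₁ as well
    have hdK₁ : mkq D ψ (inl d) ∈ (e.1 K₁ : Set _) := by
      refine ⟨g1, ?_⟩
      rw [← heq]
      exact ConnectedComponent.eq.mpr hreach
    exact hB _ hdK₁ ⟨ψ d, (mkq_inl_mem hd2).symm⟩
  -- ebar is not in the closure of D, hence free
  have hnb : ebar ∉ endBoundary G D := by
    intro hmem
    exact (hD0 ▸ hmem LK) Set.finite_empty
  rw [hlim] at hnb
  have hfree : IsFreeEnd ebar := not_not.mp hnb
  obtain ⟨Kf0, hKf0⟩ := hfree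
  set Kf : Finset V := Kf0 ∪ LK with hKfdef
  have hKf : ∀ ebar' : EndSpace G, ebar'.1 Kf = ebar.1 Kf → ebar' = ebar := by
    intro ebar' h'
    refine hKf0 ebar' ?_
    rw [← ebar'.2 Kf0 Kf Finset.subset_union_left, h',
      ebar.2 Kf0 Kf Finset.subset_union_left]
  -- the witness of freeness for e
  set Kc : Finset (Quotient (glueSetoid D ψ)) := K₁ ∪ mklF D ψ Kf with hKc
  refine ⟨Kc, fun e' he' => ?_⟩
  have hB' : ∀ q ∈ e'.1 Kc, q ∉ Set.range (fun w => mkq D ψ (inr w)) := by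
    intro q hq
    rw [he'] at hq
    exact hB q (endSpace_supp_mono e Finset.subset_union_left hq)
  set ebar' : EndSpace G := liftEnd hψ e' Kc hB' with hebar'
  -- ebar' agrees with ebar at Kf
  have heqKf : ebar'.1 Kf = ebar.1 Kf := by
    obtain ⟨v', hv'D, hv'mem, hv'L, hval'⟩ := liftEnd_rep hψ e' Kc hB' Kf
    have h1 : Kc ∪ mklF D ψ Kf = Kc := Finset.union_eq_left.mpr
      (by rw [hKc]; exact Finset.subset_union_right)
    rw [h1, he'] at hv'mem
    rw [hval']
    exact (liftEnd_eq hψ e hB (M := Kc) (fun x hx => hKc ▸ hx) hv'D hv'mem hv'L).symm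
  have hee : ebar' = ebar := hKf ebar' heqKf
  -- now e' and e agree on all large finite sets
  have main : ∀ N : Finset (Quotient (glueSetoid D ψ)), Kc ⊆ N → e'.1 N = e.1 N := by
    intro N hKcN
    have hK₁N : K₁ ⊆ N := Finset.Subset.trans (hKc ▸ Finset.subset_union_left) hKcN
    have hLNfin : ((fun v => mkq D ψ (inl v)) ⁻¹' (N : Set _)).Finite :=
      Set.Finite.preimage (mkq_inl_injective hψ).injOn N.finite_toSet
    set LN : Finset V := hLNfin.toFinset with hLN
    have hmemLN : ∀ x : V, x ∈ LN ↔ mkq D ψ (inl x) ∈ N := by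
      intro x
      rw [hLN, Set.Finite.mem_toFinset]
      exact Iff.rfl
    -- a point of e.1 N
    obtain ⟨qa, hqa⟩ := (e.1 N).nonempty
    have hqa' : qa ∉ Set.range (fun w => mkq D ψ (inr w)) :=
      hB qa (endSpace_supp_mono e hK₁N hqa)
    obtain ⟨va, hvaD, rfl⟩ := exists_inl_of_not_inr hqa'
    have hvaLN : va ∉ (LN : Set V) := by
      intro hmem
      exact (e.1 N).notMem_of_mem hqa (by
        rw [Finset.mem_coe, hmemLN] at hmem
        exact_mod_cast hmem)
    -- a point of e'.1 N
    obtain ⟨qb, hqb⟩ := (e'.1 N).nonempty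
    have hqb' : qb ∉ Set.range (fun w => mkq D ψ (inr w)) := by
      refine hB' qb (endSpace_supp_mono e' hKcN hqb)
    obtain ⟨vb, hvbD, rfl⟩ := exists_inl_of_not_inr hqb'
    have hvbLN : vb ∉ (LN : Set V) := by
      intro hmem
      exact (e'.1 N).notMem_of_mem hqb (by
        rw [Finset.mem_coe, hmemLN] at hmem
        exact_mod_cast hmem)
    -- liftEnd values at LN
    have hsub1 : K₁ ∪ mklF D ψ LN ⊆ N := by
      refine Finset.union_subset hK₁N ?_
      intro x hx
      obtain ⟨y, hy, rfl⟩ := Finset.mem_image.mp hx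
      exact (hmemLN y).mp hy
    have hsub2 : Kc ∪ mklF D ψ LN ⊆ N := by
      refine Finset.union_subset hKcN ?_
      intro x hx
      obtain ⟨y, hy, rfl⟩ := Finset.mem_image.mp hx
      exact (hmemLN y).mp hy
    have hvala : ebar.1 LN = G.componentComplMk hvaLN :=
      liftEnd_eq hψ e hB hsub1 hvaD hqa hvaLN
    have hvalb : ebar.1 LN = G.componentComplMk hvbLN := by
      rw [← hee]
      exact liftEnd_eq hψ e' hB' hsub2 hvbD hqb hvbLN
    have hcc : G.componentComplMk hvbLN = G.componentComplMk hvaLN := by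
      rw [← hvala, ← hvalb]
    obtain ⟨p⟩ := ConnectedComponent.exact hcc
    obtain ⟨g1, g2, hreach⟩ := walk_transfer_G_to_H (F := F) hψ
      (N := (N : Set _)) (L := (LN : Set V))
      (fun x hx => by rw [Finset.mem_coe, hmemLN]; exact_mod_cast hx) p
    obtain ⟨ha1, ha2⟩ := hqa
    obtain ⟨hb1, hb2⟩ := hqb
    rw [← ha2, ← hb2]
    exact ConnectedComponent.eq.mpr hreach
  -- conclude e' = e
  apply Subtype.ext
  funext N
  have h1 := main (N ∪ Kc) Finset.subset_union_right
  rw [← e'.2 N (N ∪ Kc) Finset.subset_union_left, h1,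
    e.2 N (N ∪ Kc) Finset.subset_union_left]

end GluingAux

open GluingAux Sum

/-- if the ends in the closure of `dom ψ` are exactly the non-free ends of `G`,
then `G ⊕_ψ F` has at most one non-free end. -/
theorem gluingSum_at_most_one_limit_end
    (G : SimpleGraph V) (F : SimpleGraph W)
    (hGlf : ∀ v, (G.neighborSet v).Finite) (hFlf : ∀ w, (F.neighborSet w).Finite)
    (hGc : G.Connected) (hFc : F.Connected) (hF1 : OneEnded F)
    (D : Set V) (ψ : V → W) (hψ : Set.InjOn ψ D) (hD : D.Infinite)
    (hlim : endBoundary G D = {e : EndSpace G | ¬ IsFreeEnd e}) :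
    {e : EndSpace (gluingSum G F D ψ) | ¬ IsFreeEnd e}.Subsingleton := by
  classical
  haveI : LocallyFinite F := fun w => (hFlf w).fintype
  haveI : Fact F.Preconnected := ⟨hFc.preconnected⟩
  haveI : Infinite W := GluingAux.OneEnded.infinite hF1
  intro e₁ h₁ e₂ h₂
  apply Subtype.ext
  funext K
  -- the trace of K on the F-side
  have hSfin : ((fun w => mkq D ψ (inr w)) ⁻¹' (K : Set _)).Finite :=
    Set.Finite.preimage (mkq_inr_injective).injOn K.finite_toSet
  set S : Finset W := hSfin.toFinset with hS
  have hmemS : ∀ w : W, w ∈ S ↔ mkq D ψ (inr w) ∈ K := by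
    intro w
    rw [hS, Set.Finite.mem_toFinset]
    exact Iff.rfl
  -- infinitely many F-vertices in each component
  have hT1 : ((fun w => mkq D ψ (inr w)) ⁻¹'
      ((e₁.1 K : Set _) ∩ Set.range (fun w => mkq D ψ (inr w)))).Infinite :=
    Set.Infinite.preimage (limit_end_meets_inr hψ hlim e₁ h₁ K) Set.inter_subset_right
  have hT2 : ((fun w => mkq D ψ (inr w)) ⁻¹'
      ((e₂.1 K : Set _) ∩ Set.range (fun w => mkq D ψ (inr w)))).Infinite :=
    Set.Infinite.preimage (limit_end_meets_inr hψ hlim e₂ h₂ K) Set.inter_subset_right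
  -- the union of the finite components of F - S
  haveI : Finite (F.ComponentCompl (S : Set W)) := F.componentCompl_finite S
  have hBad : (⋃ C ∈ {C : F.ComponentCompl (S : Set W) | C.supp.Finite}, C.supp).Finite :=
    Set.Finite.biUnion (Set.toFinite _) (fun C hC => hC)
  -- choose suitable vertices
  obtain ⟨w₁, hw₁⟩ := (hT1.diff (hBad.union S.finite_toSet)).nonempty
  obtain ⟨w₂, hw₂⟩ := (hT2.diff (hBad.union S.finite_toSet)).nonempty
  obtain ⟨⟨hw₁K, -⟩, hw₁n⟩ := hw₁
  obtain ⟨⟨hw₂K, -⟩, hw₂n⟩ := hw₂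
  have hw₁S : w₁ ∉ (S : Set W) := fun h => hw₁n (Or.inr h)
  have hw₂S : w₂ ∉ (S : Set W) := fun h => hw₂n (Or.inr h)
  have hC₁inf : (F.componentComplMk hw₁S).supp.Infinite := by
    by_contra hfin
    rw [Set.not_infinite] at hfin
    exact hw₁n (Or.inl (Set.mem_biUnion hfin (F.componentComplMk_mem hw₁S)))
  have hC₂inf : (F.componentComplMk hw₂S).supp.Infinite := by
    by_contra hfin
    rw [Set.not_infinite] at hfin
    exact hw₂n (Or.inl (Set.mem_biUnion hfin (F.componentComplMk_mem hw₂S)))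
  have hCC : F.componentComplMk hw₁S = F.componentComplMk hw₂S :=
    componentCompl_unique_of_oneEnded hF1 S _ _ hC₁inf hC₂inf
  obtain ⟨p⟩ := ConnectedComponent.exact hCC
  obtain ⟨g1, g2, hreach⟩ := walk_transfer_F_to_H (G := G) (D := D) (ψ := ψ)
    (N := (K : Set (Quotient (glueSetoid D ψ)))) (S := (S : Set W))
    (fun w hw => by rw [Finset.mem_coe, hmemS]; exact_mod_cast hw) p
  obtain ⟨hn1, heq1⟩ := hw₁K
  obtain ⟨hn2, heq2⟩ := hw₂K
  rw [← heq1, ← heq2]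
  exact ConnectedComponent.eq.mpr hreach
end

section
/- Every locally finite connected graph has either finitely many ends, countably infinitely many ends, or exactly continuum many ends. -/
open SimpleGraph

variable {V W U : Type*}

lemma countable_of_locallyFinite_connected (G : SimpleGraph V)
    (hlf : ∀ v, (G.neighborSet v).Finite) (hc : G.Connected) : Countable V := by
  obtain ⟨v₀⟩ := hc.nonempty
  have hS : ∀ n : ℕ, {v : V | ∃ p : G.Walk v₀ v, p.length = n}.Finite := by
    intro n
    induction n with
    | zero =>
      refine (Set.finite_singleton v₀).subset ?_
      rintro v ⟨p, hp⟩
      exact Set.mem_singleton_iff.mpr (SimpleGraph.Walk.eq_of_length_eq_zero hp).symm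
    | succ n ih =>
      refine (ih.biUnion (fun w _ => hlf w)).subset ?_
      rintro v ⟨p, hp⟩
      have hr : p.reverse.length = n + 1 := by rw [SimpleGraph.Walk.length_reverse]; exact hp
      cases hq : p.reverse with
      | nil => rw [hq] at hr; simp at hr
      | @cons _ w _ ha q =>
        rw [hq] at hr
        simp only [SimpleGraph.Walk.length_cons, Nat.add_right_cancel_iff] at hr
        refine Set.mem_biUnion ⟨q.reverse, by simp [hr]⟩ ?_
        exact ha.symm
  have huniv : (Set.univ : Set V) = ⋃ n : ℕ, {v : V | ∃ p : G.Walk v₀ v, p.length = n} := by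
    ext v
    simp only [Set.mem_univ, Set.mem_iUnion, Set.mem_setOf_eq, true_iff]
    obtain ⟨p⟩ := hc.preconnected v₀ v
    exact ⟨p.length, p, rfl⟩
  rw [← Set.countable_univ_iff, huniv]
  exact Set.countable_iUnion fun n => (hS n).countable

/-- a locally finite connected graph has finitely many, countably infinitely
many, or exactly continuum many ends. -/
theorem end_cardinality_trichotomy (G : SimpleGraph V)
    (hlf : ∀ v, (G.neighborSet v).Finite) (hc : G.Connected) :
    Finite (EndSpace G) ∨ Cardinal.mk (EndSpace G) = Cardinal.aleph0 ∨
      Cardinal.mk (EndSpace G) = Cardinal.continuum := by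
  classical
  haveI : G.LocallyFinite := fun v => (hlf v).fintype
  haveI : Fact G.Preconnected := ⟨hc.preconnected⟩
  haveI hfin : ∀ K : Finset V, Finite (G.ComponentCompl (K : Set V)) :=
    fun K => G.componentCompl_finite K
  haveI : Countable V := countable_of_locallyFinite_connected G hlf hc
  cases finite_or_infinite V with
  | inl h =>
    left
    haveI := h
    haveI : Fintype V := Fintype.ofFinite V
    haveI : Finite (∀ K : Finset V, G.ComponentCompl (K : Set V)) := by
      infer_instance
    exact Subtype.finite
  | inr h =>
    haveI hdisc : ∀ K : Finset V, DiscreteTopology (G.ComponentCompl (K : Set V)) :=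
      fun K => ⟨rfl⟩
    haveI : ∀ K : Finset V, Countable (G.ComponentCompl (K : Set V)) :=
      fun K => Finite.to_countable
    haveI : ∀ K : Finset V, PolishSpace (G.ComponentCompl (K : Set V)) := fun K =>
      inferInstance
    haveI : PolishSpace (∀ K : Finset V, G.ComponentCompl (K : Set V)) := inferInstance
    have hC : IsClosed {f : ∀ K : Finset V, G.ComponentCompl (K : Set V) |
        ∀ (K L : Finset V) (h : K ⊆ L), (f L).hom (by exact_mod_cast h) = f K} := by
      have heq : {f : ∀ K : Finset V, G.ComponentCompl (K : Set V) |
          ∀ (K L : Finset V) (h : K ⊆ L), (f L).hom (by exact_mod_cast h) = f K}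
          = ⋂ (K : Finset V) (L : Finset V) (h : K ⊆ L),
            {f : ∀ K : Finset V, G.ComponentCompl (K : Set V) |
              (f L).hom (by exact_mod_cast h) = f K} := by
        ext f
        simp only [Set.mem_setOf_eq, Set.mem_iInter]
      rw [heq]
      refine isClosed_iInter fun K => isClosed_iInter fun L => isClosed_iInter fun hKL => ?_
      exact isClosed_eq
        ((continuous_of_discreteTopology (α := G.ComponentCompl (L : Set V))
          (f := fun c => c.hom (by exact_mod_cast hKL))).comp (continuous_apply L))
        (continuous_apply K)
    haveI hPol : PolishSpace (EndSpace G) := hC.polishSpace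
    by_cases hcnt : Countable (EndSpace G)
    · cases finite_or_infinite (EndSpace G) with
      | inl hf => exact Or.inl hf
      | inr hi => exact Or.inr (Or.inl (Cardinal.mk_eq_aleph0 _))
    · refine Or.inr (Or.inr (le_antisymm ?_ ?_))
      · have h1 : Cardinal.mk (EndSpace G)
            ≤ Cardinal.mk (∀ K : Finset V, G.ComponentCompl (K : Set V)) :=
          Cardinal.mk_le_of_injective (f := fun e : EndSpace G => e.1)
            (fun a b hab => Subtype.ext hab)
        refine h1.trans ?_
        rw [Cardinal.mk_pi]
        have h2 : (Cardinal.prod fun K : Finset V =>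
              Cardinal.mk (G.ComponentCompl (K : Set V)))
            ≤ Cardinal.prod fun _ : Finset V => Cardinal.aleph0 :=
          Cardinal.prod_le_prod _ _ fun K => Cardinal.mk_le_aleph0
        refine h2.trans ?_
        rw [Cardinal.prod_const']
        calc Cardinal.aleph0 ^ Cardinal.mk (Finset V)
            ≤ Cardinal.aleph0 ^ Cardinal.aleph0 :=
              Cardinal.power_le_power_left Cardinal.aleph0_ne_zero Cardinal.mk_le_aleph0
          _ = Cardinal.continuum := Cardinal.aleph0_power_aleph0
      · obtain ⟨f, -, -, finj⟩ :=
          isClosed_univ.exists_nat_bool_injection_of_not_countable (α := EndSpace G)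
            (by rwa [Set.countable_univ_iff])
        have h3 := Cardinal.lift_mk_le'.mpr ⟨⟨f, finj⟩⟩
        simp only [Cardinal.mk_arrow, Cardinal.mk_bool, Cardinal.mk_nat, Cardinal.lift_id,
          Cardinal.lift_id', Cardinal.lift_uzero, Cardinal.two_power_aleph0,
          Cardinal.lift_continuum] at h3
        exact h3
end

section
/- The countably infinite regular tree T_∞ (in which every vertex has countably infinite degree) and the disjoint union of two copies of T_∞ are hypomorphic but not isomorphic. -/
open SimpleGraph

variable {V W U : Type*}

/-! ### Auxiliary constructions for the proof -/

/-- The canonical countably-branching tree on finite sequences of naturals. -/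
private def tinf : SimpleGraph (List ℕ) where
  Adj a b := ∃ n, a = n :: b ∨ b = n :: a
  symm := by constructor; rintro a b ⟨n, h | h⟩; exacts [⟨n, Or.inr h⟩, ⟨n, Or.inl h⟩]
  loopless := by
    constructor; rintro a ⟨n, h | h⟩ <;> exact absurd (congrArg List.length h) (by simp)

/-- Countably many disjoint copies of `tinf`. -/
private def finf : SimpleGraph (ℕ × List ℕ) where
  Adj x y := x.1 = y.1 ∧ tinf.Adj x.2 y.2
  symm := ⟨fun x y h => ⟨h.1.symm, h.2.symm⟩⟩
  loopless := ⟨fun x h => tinf.loopless.irrefl _ h.2⟩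

private lemma finf_adj {x y : ℕ × List ℕ} :
    finf.Adj x y ↔ x.1 = y.1 ∧ tinf.Adj x.2 y.2 := Iff.rfl

private lemma sumGraph_adj {G : SimpleGraph V} {F : SimpleGraph W} {x y : V ⊕ W} :
    (sumGraph G F).Adj x y ↔ ((∃ a b, x = Sum.inl a ∧ y = Sum.inl b ∧ G.Adj a b) ∨
      (∃ a b, x = Sum.inr a ∧ y = Sum.inr b ∧ F.Adj a b)) := Iff.rfl

private lemma sumGraph_adj_inl {G : SimpleGraph V} {F : SimpleGraph W} {a b : V} :
    (sumGraph G F).Adj (Sum.inl a) (Sum.inl b) ↔ G.Adj a b := by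
  simp [sumGraph_adj]

private lemma sumGraph_adj_inr {G : SimpleGraph V} {F : SimpleGraph W} {a b : W} :
    (sumGraph G F).Adj (Sum.inr a) (Sum.inr b) ↔ F.Adj a b := by
  simp [sumGraph_adj]

private lemma sumGraph_adj_inl_inr {G : SimpleGraph V} {F : SimpleGraph W} {a : V} {b : W} :
    ¬ (sumGraph G F).Adj (Sum.inl a) (Sum.inr b) := by
  simp [sumGraph_adj]

private lemma sumGraph_adj_inr_inl {G : SimpleGraph V} {F : SimpleGraph W} {a : W} {b : V} :
    ¬ (sumGraph G F).Adj (Sum.inr a) (Sum.inl b) := by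
  simp [sumGraph_adj]

/-- Congruence of isomorphisms under disjoint unions. -/
private def sumIsoCongr {V W V' W' : Type*} {G : SimpleGraph V} {G' : SimpleGraph V'}
    {F : SimpleGraph W} {F' : SimpleGraph W'} (e1 : G ≃g G') (e2 : F ≃g F') :
    sumGraph G F ≃g sumGraph G' F' where
  toEquiv := Equiv.sumCongr e1.toEquiv e2.toEquiv
  map_rel_iff' := by
    intro x y
    rcases x with a | a <;> rcases y with b | b <;>
      simp [sumGraph_adj_inl, sumGraph_adj_inr, sumGraph_adj_inl_inr, sumGraph_adj_inr_inl,
        e1.map_rel_iff, e2.map_rel_iff]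

/-- Restricting an isomorphism to induced subgraphs. -/
private def induceIso {G : SimpleGraph V} {H : SimpleGraph W} (e : G ≃g H)
    (s : Set V) (t : Set W) (h : ∀ x, x ∈ s ↔ (e x) ∈ t) :
    G.induce s ≃g H.induce t where
  toEquiv := e.toEquiv.subtypeEquiv h
  map_rel_iff' := by
    intro a b
    simp only [comap_adj, Function.Embedding.coe_subtype, Equiv.subtypeEquiv_apply]
    exact e.map_rel_iff

private lemma tinf_adj_concat (m m' : List ℕ) (i i' : ℕ) :
    tinf.Adj (m ++ [i]) (m' ++ [i']) ↔ i = i' ∧ tinf.Adj m m' := by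
  constructor
  · rintro ⟨n, h | h⟩
    · rw [show (n :: (m' ++ [i'])) = (n :: m') ++ [i'] from rfl] at h
      obtain ⟨h1, h2⟩ := List.append_inj' h (by simp)
      exact ⟨by simpa using h2, ⟨n, Or.inl h1⟩⟩
    · rw [show (n :: (m ++ [i])) = (n :: m) ++ [i] from rfl] at h
      obtain ⟨h1, h2⟩ := List.append_inj' h (by simp)
      exact ⟨by simpa using h2.symm, ⟨n, Or.inr h1⟩⟩
  · rintro ⟨rfl, n, h | h⟩
    · exact ⟨n, Or.inl (by rw [h, List.cons_append])⟩
    · exact ⟨n, Or.inr (by rw [h, List.cons_append])⟩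

/-- `tinf` minus its root is isomorphic to countably many copies of `tinf`. -/
private def nonzeroIso : tinf.induce {l : List ℕ | l ≠ []} ≃g finf where
  toEquiv :=
    { toFun := fun x => (x.1.getLast x.2, x.1.dropLast)
      invFun := fun p => ⟨p.2 ++ [p.1], by simp⟩
      left_inv := fun x => Subtype.ext (List.dropLast_append_getLast x.2)
      right_inv := fun p => by simp }
  map_rel_iff' := by
    intro a b
    simp only [comap_adj, Function.Embedding.coe_subtype, Equiv.coe_fn_mk, finf_adj]
    constructor
    · rintro ⟨h1, h2⟩
      have h3 := (tinf_adj_concat _ _ _ _).mpr ⟨h1, h2⟩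
      rwa [List.dropLast_append_getLast a.2, List.dropLast_append_getLast b.2] at h3
    · intro h
      have h' : tinf.Adj (a.1.dropLast ++ [a.1.getLast a.2])
          (b.1.dropLast ++ [b.1.getLast b.2]) := by
        rwa [List.dropLast_append_getLast a.2, List.dropLast_append_getLast b.2]
      exact (tinf_adj_concat _ _ _ _).mp h'

/-- The equivalence underlying deletion of a left vertex from a disjoint union. -/
private def delSumEquivL {V : Type*} (w : V) :
    {x : V ⊕ V // x ∈ {u : V ⊕ V | u ≠ Sum.inl w}} ≃ ({u : V // u ∈ {u : V | u ≠ w}} ⊕ V) where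
  toFun x := match x with
    | ⟨Sum.inl a, h⟩ => Sum.inl ⟨a, fun hh => h (by rw [show a = w from hh])⟩
    | ⟨Sum.inr b, _⟩ => Sum.inr b
  invFun y := match y with
    | Sum.inl a => ⟨Sum.inl a.1, fun hh => a.2 (Sum.inl.inj hh)⟩
    | Sum.inr b => ⟨Sum.inr b, fun hh => by cases hh⟩
  left_inv := by rintro ⟨a | b, h⟩ <;> rfl
  right_inv := by rintro (a | b) <;> rfl

private def delSumIsoL {V : Type*} (T : SimpleGraph V) (w : V) :
    (sumGraph T T).induce {u | u ≠ Sum.inl w} ≃g sumGraph (T.induce {u | u ≠ w}) T where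
  toEquiv := delSumEquivL w
  map_rel_iff' := by
    rintro ⟨a | a, ha⟩ ⟨b | b, hb⟩ <;>
      simp [delSumEquivL, sumGraph_adj_inl, sumGraph_adj_inr, sumGraph_adj_inl_inr,
        sumGraph_adj_inr_inl]

/-- The equivalence underlying deletion of a right vertex from a disjoint union. -/
private def delSumEquivR {V : Type*} (w : V) :
    {x : V ⊕ V // x ∈ {u : V ⊕ V | u ≠ Sum.inr w}} ≃ (V ⊕ {u : V // u ∈ {u : V | u ≠ w}}) where
  toFun x := match x with
    | ⟨Sum.inr a, h⟩ => Sum.inr ⟨a, fun hh => h (by rw [show a = w from hh])⟩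
    | ⟨Sum.inl b, _⟩ => Sum.inl b
  invFun y := match y with
    | Sum.inr a => ⟨Sum.inr a.1, fun hh => a.2 (Sum.inr.inj hh)⟩
    | Sum.inl b => ⟨Sum.inl b, fun hh => by cases hh⟩
  left_inv := by rintro ⟨a | b, h⟩ <;> rfl
  right_inv := by rintro (a | b) <;> rfl

private def delSumIsoR {V : Type*} (T : SimpleGraph V) (w : V) :
    (sumGraph T T).induce {u | u ≠ Sum.inr w} ≃g sumGraph T (T.induce {u | u ≠ w}) where
  toEquiv := delSumEquivR w
  map_rel_iff' := by
    rintro ⟨a | a, ha⟩ ⟨b | b, hb⟩ <;>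
      simp [delSumEquivR, sumGraph_adj_inl, sumGraph_adj_inr, sumGraph_adj_inl_inr,
        sumGraph_adj_inr_inl]

private def finfSumIso : sumGraph finf tinf ≃g finf where
  toEquiv :=
    { toFun := fun x => match x with
        | Sum.inl (i, l) => (i + 1, l)
        | Sum.inr l => (0, l)
      invFun := fun p => match p with
        | (0, l) => Sum.inr l
        | (i + 1, l) => Sum.inl (i, l)
      left_inv := by rintro (⟨i, l⟩ | l) <;> rfl
      right_inv := by rintro ⟨(_ | i), l⟩ <;> rfl }
  map_rel_iff' := by
    rintro (⟨i, l⟩ | l) (⟨j, m⟩ | m) <;>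
      simp [finf_adj, sumGraph_adj_inl, sumGraph_adj_inr, sumGraph_adj_inl_inr,
        sumGraph_adj_inr_inl]

private def finfSumIso' : sumGraph tinf finf ≃g finf where
  toEquiv :=
    { toFun := fun x => match x with
        | Sum.inr (i, l) => (i + 1, l)
        | Sum.inl l => (0, l)
      invFun := fun p => match p with
        | (0, l) => Sum.inl l
        | (i + 1, l) => Sum.inr (i, l)
      left_inv := by rintro (l | ⟨i, l⟩) <;> rfl
      right_inv := by rintro ⟨(_ | i), l⟩ <;> rfl }
  map_rel_iff' := by
    rintro (l | ⟨i, l⟩) (m | ⟨j, m⟩) <;>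
      simp [finf_adj, sumGraph_adj_inl, sumGraph_adj_inr, sumGraph_adj_inl_inr,
        sumGraph_adj_inr_inl]

/-- The recursive construction of the vertex (and its parent) indexed by a list. -/
private def bAux {V : Type*} (E : V → V → ℕ → V) (v : V) : List ℕ → V × V
  | [] => (v, v)
  | n :: l => (E (bAux E v l).1 (bAux E v l).2 n, (bAux E v l).1)

/-- The canonical walk from `bAux E v l` down to the root `v`. -/
private def bWalk {V : Type*} (T : SimpleGraph V) (E : V → V → ℕ → V) (v : V)
    (hadj : ∀ (l : List ℕ) (n : ℕ), T.Adj ((bAux E v l).1) ((bAux E v (n :: l)).1)) :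
    ∀ l : List ℕ, T.Walk ((bAux E v l).1) v
  | [] => Walk.nil
  | n :: l => Walk.cons (hadj l n).symm (bWalk T E v hadj l)

/-- Key uniqueness lemma: every countable tree all of whose vertices have infinitely many
neighbours is isomorphic to `tinf`, via an isomorphism sending `[]` to any chosen root. -/
private theorem key {V : Type*} [Countable V] (T : SimpleGraph V) (hT : T.IsTree)
    (hdeg : ∀ u, (T.neighborSet u).Infinite) (v : V) :
    ∃ f : tinf ≃g T, f [] = v := by
  classical
  have hs : ∀ u p : V, ∃ g : ℕ → V, (∀ n, g n ∈ T.neighborSet u \ {p}) ∧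
      Function.Injective g ∧ ∀ x ∈ T.neighborSet u \ {p}, ∃ n, g n = x := by
    intro u p
    have h1 : (T.neighborSet u \ {p}).Infinite := (hdeg u).diff (Set.finite_singleton p)
    haveI := h1.to_subtype
    obtain ⟨d⟩ := nonempty_denumerable ↥(T.neighborSet u \ {p})
    let e : ℕ ≃ ↥(T.neighborSet u \ {p}) := (Denumerable.eqv _).symm
    refine ⟨fun n => (e n : V), fun n => (e n).2,
      fun a b hab => e.injective (Subtype.val_injective hab),
      fun x hx => ⟨e.symm ⟨x, hx⟩, by simp⟩⟩
  choose E hE1 hE2 hE3 using hs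
  set f : List ℕ → V := fun l => (bAux E v l).1 with hfdef
  have hfnil : f [] = v := rfl
  have hfcons : ∀ n l, f (n :: l) = E (f l) ((bAux E v l).2) n := fun n l => rfl
  have hmem : ∀ l n, f (n :: l) ∈ T.neighborSet (f l) \ {(bAux E v l).2} :=
    fun l n => hE1 (f l) ((bAux E v l).2) n
  have hadj : ∀ l n, T.Adj (f l) (f (n :: l)) := fun l n => (hmem l n).1
  have hne2 : ∀ l n, f (n :: l) ≠ (bAux E v l).2 :=
    fun l n h => (hmem l n).2 (Set.mem_singleton_iff.mpr h)
  set w : ∀ l : List ℕ, T.Walk (f l) v := bWalk T E v hadj with hwdef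
  have hwnil : w [] = Walk.nil := rfl
  have hwcons : ∀ n l, w (n :: l) = Walk.cons (hadj l n).symm (w l) := fun n l => rfl
  -- joint invariant: each canonical walk is a path, and the only edge at its tip goes
  -- to the parent
  have hQ : ∀ l : List ℕ, (w l).IsPath ∧
      ∀ y : V, s(y, f l) ∈ (w l).edges → y = (bAux E v l).2 := by
    intro l
    induction l with
    | nil =>
      refine ⟨by rw [hwnil]; exact Walk.IsPath.nil, ?_⟩
      intro y hy
      rw [hwnil] at hy
      cases hy
    | cons n l ih =>
      obtain ⟨ihp, ihe⟩ := ih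
      have hne : f (n :: l) ≠ f l := fun h => T.loopless.irrefl _ (h ▸ hadj l n)
      have hnotmem : f (n :: l) ∉ (w l).support := by
        intro hmemsup
        have hqp : ((w l).takeUntil (f (n :: l)) hmemsup).IsPath := ihp.takeUntil hmemsup
        have hcyc : (Walk.cons (hadj l n).symm ((w l).takeUntil (f (n :: l)) hmemsup)).IsCycle := by
          rw [Walk.cons_isCycle_iff]
          refine ⟨hqp, fun hedge => ?_⟩
          have hedge' : s(f (n :: l), f l) ∈ (w l).edges :=
            Walk.edges_takeUntil_subset _ _ hedge
          exact hne2 l n (ihe _ hedge')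
        exact hT.IsAcyclic _ hcyc
      have hpath : (w (n :: l)).IsPath := by
        rw [hwcons]
        exact ihp.cons hnotmem
      refine ⟨hpath, ?_⟩
      intro y hy
      rw [hwcons, Walk.edges_cons] at hy
      rcases List.mem_cons.mp hy with h1 | h1
      · rw [Sym2.eq_iff] at h1
        rcases h1 with ⟨rfl, h2⟩ | ⟨h2, -⟩
        · exact absurd h2 hne
        · exact h2
      · exact absurd (Walk.snd_mem_support_of_mem_edges _ h1) hnotmem
  have hpath : ∀ l, (w l).IsPath := fun l => (hQ l).1
  have hsup : ∀ l l' : List ℕ, f l = f l' → (w l).support = (w l').support := by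
    intro l l' h
    have h1 : ((w l').copy h.symm rfl).IsPath := (Walk.isPath_copy _ _ _).mpr (hpath l')
    have h2 : w l = (w l').copy h.symm rfl :=
      (hT.existsUnique_path (f l) v).unique (hpath l) h1
    rw [h2, Walk.support_copy]
  have hinj : Function.Injective f := by
    intro l l' h
    induction l generalizing l' with
    | nil =>
      cases l' with
      | nil => rfl
      | cons n t =>
        exfalso
        have hs' := hsup [] (n :: t) h
        rw [hwnil, hwcons, Walk.support_cons] at hs'
        have : (w t).support = [] := (List.cons.inj hs').2.symm
        exact Walk.support_ne_nil _ this
    | cons n t iht =>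
      cases l' with
      | nil =>
        exfalso
        have hs' := hsup (n :: t) [] h
        rw [hwnil, hwcons, Walk.support_cons] at hs'
        have : (w t).support = [] := (List.cons.inj hs').2
        exact Walk.support_ne_nil _ this
      | cons n' t' =>
        have hs' := hsup (n :: t) (n' :: t') h
        rw [hwcons, hwcons, Walk.support_cons, Walk.support_cons] at hs'
        have htail : (w t).support = (w t').support := (List.cons.inj hs').2
        have hft : f t = f t' := by
          have e1 := Walk.support_eq_cons (w t)
          have e2 := Walk.support_eq_cons (w t')
          rw [e1, e2] at htail
          exact (List.cons.inj htail).1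
        obtain rfl : t = t' := iht hft
        have hnn : n = n' := hE2 (f t) ((bAux E v t).2) h
        rw [hnn]
  have hsurj0 : ∀ (a b : V) (p : T.Walk a b), b = v → ∃ l, f l = a := by
    intro a b p
    induction p with
    | nil => rintro rfl; exact ⟨[], rfl⟩
    | @cons x y z hxy p ih =>
      intro hz
      obtain ⟨l, hl⟩ := ih hz
      by_cases hx : x = (bAux E v l).2
      · cases l with
        | nil => exact ⟨[], hx.symm⟩
        | cons m t => exact ⟨t, hx.symm⟩
      · have hxmem : x ∈ T.neighborSet (f l) \ {(bAux E v l).2} :=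
          ⟨by rw [SimpleGraph.mem_neighborSet, hl]; exact hxy.symm, hx⟩
        obtain ⟨n, hn⟩ := hE3 _ _ x hxmem
        exact ⟨n :: l, hn⟩
  have hsurj : Function.Surjective f := by
    intro u
    obtain ⟨p⟩ := hT.isConnected.preconnected u v
    exact hsurj0 u v p rfl
  have hadjiff : ∀ a b : List ℕ, T.Adj (f a) (f b) ↔ tinf.Adj a b := by
    intro a b
    constructor
    · intro hab
      by_cases hb : f b = (bAux E v a).2
      · cases a with
        | nil =>
          exfalso
          have : f b = f [] := hb
          rw [this] at hab
          exact T.loopless.irrefl _ hab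
        | cons m t =>
          have hbt : b = t := hinj hb
          exact ⟨m, Or.inl (by rw [hbt])⟩
      · have hmem' : f b ∈ T.neighborSet (f a) \ {(bAux E v a).2} := ⟨hab, hb⟩
        obtain ⟨n, hn⟩ := hE3 _ _ _ hmem'
        have hna : n :: a = b := hinj hn
        exact ⟨n, Or.inr hna.symm⟩
    · rintro ⟨n, rfl | rfl⟩
      · exact (hadj b n).symm
      · exact hadj a n
  exact ⟨⟨Equiv.ofBijective f ⟨hinj, hsurj⟩, fun {a b} => hadjiff a b⟩, rfl⟩

/-- Any walk in a disjoint union stays on one side. -/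
private lemma sumGraph_walk_side {G : SimpleGraph V} {F : SimpleGraph W}
    {x y : V ⊕ W} (q : (sumGraph G F).Walk x y) : x.isLeft = y.isLeft := by
  induction q with
  | nil => rfl
  | cons h q ih =>
    rw [← ih]
    rcases (sumGraph_adj.mp h) with ⟨a, b, rfl, rfl, -⟩ | ⟨a, b, rfl, rfl, -⟩ <;> rfl

/-- the countably infinite regular tree `T∞` and the disjoint union of two
copies of it are hypomorphic but not isomorphic. -/
theorem tree_infinite_degree_hypomorphic_not_isomorphic {V : Type*} [Countable V]
    (T : SimpleGraph V) (hT : T.IsTree) (hdeg : ∀ v, (T.neighborSet v).Infinite) :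
    Hypomorphic T (sumGraph T T) ∧ IsEmpty (T ≃g sumGraph T T) := by
  classical
  obtain ⟨v0⟩ : Nonempty V := hT.isConnected.nonempty
  have hVinf : Infinite V := Set.infinite_univ_iff.mp ((hdeg v0).mono (Set.subset_univ _))
  have hTbase : ∀ v : V, ∃ f : tinf ≃g T, f [] = v := key T hT hdeg
  have hD : ∀ v : V, Nonempty ((T.induce {u | u ≠ v}) ≃g finf) := by
    intro v
    obtain ⟨g, hg⟩ := hTbase v
    have hcond : ∀ l : List ℕ, l ∈ {l : List ℕ | l ≠ []} ↔ g l ∈ {u : V | u ≠ v} := by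
      intro l
      simp only [Set.mem_setOf_eq]
      constructor
      · intro h hgl
        exact h (g.injective (by rw [hgl, hg]))
      · intro h hl
        subst hl
        exact h hg
    exact ⟨(induceIso g _ _ hcond).symm.trans nonzeroIso⟩
  have hTt : Nonempty (T ≃g tinf) := by
    obtain ⟨g, -⟩ := hTbase v0
    exact ⟨g.symm⟩
  obtain ⟨gT⟩ := hTt
  constructor
  · obtain ⟨dV⟩ := nonempty_denumerable V
    let eV : V ≃ ℕ := Denumerable.eqv V
    refine ⟨eV.trans (Equiv.natSumNatEquivNat.symm.trans (Equiv.sumCongr eV.symm eV.symm)),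
      fun v => ?_⟩
    obtain ⟨gD⟩ := hD v
    rcases hφ : (eV.trans (Equiv.natSumNatEquivNat.symm.trans
        (Equiv.sumCongr eV.symm eV.symm))) v with w | w
    · obtain ⟨gW⟩ := hD w
      exact ⟨gD.trans (finfSumIso.symm.trans
        ((sumIsoCongr gW gT).symm.trans (delSumIsoL T w).symm))⟩
    · obtain ⟨gW⟩ := hD w
      exact ⟨gD.trans (finfSumIso'.symm.trans
        ((sumIsoCongr gT gW).symm.trans (delSumIsoR T w).symm))⟩
  · refine ⟨fun e => ?_⟩
    have hreach : (sumGraph T T).Reachable (Sum.inl v0) (Sum.inr v0) := by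
      have h := hT.isConnected.preconnected (e.symm (Sum.inl v0)) (e.symm (Sum.inr v0))
      have h2 := h.map e.toHom
      simpa using h2
    obtain ⟨p⟩ := hreach
    simpa using sumGraph_walk_side p
end

section
/- If F is a connected, locally finite, infinite graph, then the Cartesian product F × ℕ of F with a ray is one-ended. -/
open SimpleGraph

variable {V W U : Type*}

section BoxProdRayAux

lemma boxRay_adj_up (F : SimpleGraph V) (v : V) (n : ℕ) :
    (F.boxProd rayGraph).Adj (v, n) (v, n+1) := by
  rw [SimpleGraph.boxProd_adj]
  exact Or.inr ⟨by simp [rayGraph, SimpleGraph.fromRel_adj], rfl⟩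

lemma boxRay_reach_column (F : SimpleGraph V) (K : Set (V × ℕ)) (v : V) (a : ℕ) :
    ∀ b (hb : a ≤ b) (h : ∀ k, a ≤ k → k ≤ b → (v, k) ∉ K),
    ((F.boxProd rayGraph).induce Kᶜ).Reachable
      ⟨(v, a), h a le_rfl hb⟩ ⟨(v, b), h b hb le_rfl⟩ := by
  intro b hb
  induction b, hb using Nat.le_induction with
  | base => intro h; rfl
  | succ n hn ih =>
    intro h
    have h' : ∀ k, a ≤ k → k ≤ n → (v, k) ∉ K := fun k h1 h2 => h k h1 (by omega)
    refine (ih h').trans (SimpleGraph.Adj.reachable ?_)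
    have : (F.boxProd rayGraph).Adj (v, n) (v, n+1) := boxRay_adj_up F v n
    simpa using this

lemma boxRay_reach_level (F : SimpleGraph V) (K : Set (V × ℕ)) (m : ℕ)
    (hK : ∀ x : V, (x, m) ∉ K) {u w : V} (h : F.Reachable u w) :
    ((F.boxProd rayGraph).induce Kᶜ).Reachable ⟨(u, m), hK u⟩ ⟨(w, m), hK w⟩ := by
  obtain ⟨p⟩ := h
  induction p with
  | nil => rfl
  | @cons x y z a q ih =>
    refine (SimpleGraph.Adj.reachable ?_).trans ih
    have : (F.boxProd rayGraph).Adj (x, m) (y, m) := by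
      rw [SimpleGraph.boxProd_adj]; exact Or.inl ⟨a, rfl⟩
    simpa using this

end BoxProdRayAux

/-- if `F` is a connected, locally finite, infinite graph, then `F × ℕ` is
one-ended. -/
theorem boxProd_ray_oneEnded (F : SimpleGraph V) [Infinite V]
    (hc : F.Connected) (hlf : ∀ v, (F.neighborSet v).Finite) :
    OneEnded (F.boxProd rayGraph) := by
  classical
  obtain ⟨v0⟩ : Nonempty V := inferInstance
  set G := F.boxProd rayGraph with hG
  let N : Finset (V × ℕ) → ℕ := fun K => (K.sup Prod.snd) + 1
  have hN : ∀ (K : Finset (V × ℕ)) (v : V) (k : ℕ), N K ≤ k →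
      (v, k) ∉ (K : Set (V × ℕ)) := by
    intro K v k hk hmem
    have := Finset.le_sup (f := Prod.snd) (by exact_mod_cast hmem)
    simp only [N] at hk
    omega
  -- the canonical component
  have keyA : ∀ (K : Finset (V × ℕ)) (v : V) (n : ℕ) (hn : N K ≤ n)
      (h : (v, n) ∉ (K : Set (V × ℕ))),
      G.componentComplMk h = G.componentComplMk (hN K v0 (N K) le_rfl) := by
    intro K v n hn h
    have hlev : ∀ x : V, (x, n) ∉ (K : Set (V × ℕ)) := fun x => hN K x n hn
    have r1 : (G.induce (↑K : Set (V × ℕ))ᶜ).Reachable ⟨(v, n), hlev v⟩ ⟨(v0, n), hlev v0⟩ :=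
      boxRay_reach_level F (↑K) n hlev (hc.preconnected v v0)
    have r2 : (G.induce (↑K : Set (V × ℕ))ᶜ).Reachable
        ⟨(v0, N K), hN K v0 (N K) le_rfl⟩ ⟨(v0, n), hlev v0⟩ :=
      boxRay_reach_column F (↑K) v0 (N K) n hn (fun k hk _ => hN K v0 k hk)
    exact SimpleGraph.ConnectedComponent.sound (r1.trans r2.symm)
  refine ⟨⟨fun K => G.componentComplMk (hN K v0 (N K) le_rfl), ?_⟩, ?_⟩
  · intro K L hKL
    rw [SimpleGraph.ComponentCompl.hom_mk]
    exact keyA K v0 (N L) (by simp only [N]; exact Nat.succ_le_succ (Finset.sup_mono hKL)) _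
  · rintro ⟨f, hf⟩
    apply Subtype.ext
    funext K
    show f K = G.componentComplMk (hN K v0 (N K) le_rfl)
    have hinf : (f K).supp.Infinite := by
      rw [SimpleGraph.ComponentCompl.infinite_iff_in_all_ranges]
      intro L hL
      exact ⟨f L, hf K L hL⟩
    by_cases hex : ∃ p ∈ (f K).supp, N K ≤ p.2
    · obtain ⟨⟨v, n⟩, ⟨hvn, hmk⟩, hn⟩ := hex
      rw [← hmk]
      exact keyA K v n hn hvn
    · push_neg at hex
      have hsub : (f K).supp ⊆ (Prod.fst '' (f K).supp) ×ˢ Set.Iio (N K) := by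
        intro p hp
        exact ⟨⟨p, hp, rfl⟩, hex p hp⟩
      have himg : (Prod.fst '' (f K).supp).Infinite := by
        intro hfin
        exact hinf (Set.Finite.subset (hfin.prod (Set.finite_Iio _)) hsub)
      obtain ⟨v, hv_img, hv⟩ := himg.exists_notMem_finset (K.image Prod.fst)
      obtain ⟨p, hp, hfst⟩ := hv_img
      have hvfree : ∀ k, (p.1, k) ∉ (K : Set (V × ℕ)) := by
        intro k hk
        exact hv (Finset.mem_image.mpr ⟨(p.1, k), by exact_mod_cast hk, by rw [hfst]⟩)
      obtain ⟨hpK, hmk⟩ := hp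
      have hle : p.2 ≤ N K := le_of_lt (hex p ⟨hpK, hmk⟩)
      have r1 : (G.induce (↑K : Set (V × ℕ))ᶜ).Reachable
          ⟨(p.1, p.2), hvfree p.2⟩ ⟨(p.1, N K), hvfree (N K)⟩ :=
        boxRay_reach_column F (↑K) p.1 p.2 (N K) hle (fun k _ _ => hvfree k)
      rw [← hmk]
      have e1 : G.componentComplMk hpK = G.componentComplMk (hvfree (N K)) := by
        refine SimpleGraph.ConnectedComponent.sound ?_
        have : ((p.1, p.2) : V × ℕ) = p := Prod.mk.eta
        convert r1 using 2
      exact e1.trans (keyA K p.1 (N K) le_rfl (hvfree (N K)))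
end
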